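/- arXiv:1707.09730 — 10 statements merged into one kernel-verified Lean document; each statement's English description precedes it below -/
import Mathlib

section
/- In the deformed Clifford algebra Cl_q(n), for any 1 ≤ i ≤ n-1, the commutator [ψ_i ψ_{i+1}†, ψ_{i+1} ψ_i†] equals (v_i v_{i+1}^{-1} - v_i^{-1} v_{i+1})/(q - q^{-1}). -/
/-- The defining relations of the deformed Clifford algebra `Cl_q(n)`:
an associative algebra `A` over a field `K` with elements `ψ i`, `ψd i` (for `ψ_i†`),
`v i`, `vinv i` (for `v_i^{±1}`), `i < n`, satisfying the defining relations. -/
structure CliffordRel (K : Type*) (A : Type*) [Field K] [Ring A] [Algebra K A]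
    (q : K) (n : ℕ) (ψ ψd v vinv : ℕ → A) : Prop where
  v_comm : ∀ i j, i < n → j < n → v i * v j = v j * v i
  v_vinv : ∀ i, i < n → v i * vinv i = 1
  vinv_v : ∀ i, i < n → vinv i * v i = 1
  v_ψ : ∀ i j, i < n → j < n → v i * ψ j = (if i = j then q else 1) • (ψ j * v i)
  v_ψd : ∀ i j, i < n → j < n → v i * ψd j = (if i = j then q⁻¹ else 1) • (ψd j * v i)
  ψ_ψ : ∀ i j, i < n → j < n → ψ i * ψ j + ψ j * ψ i = 0
  ψd_ψd : ∀ i j, i < n → j < n → ψd i * ψd j + ψd j * ψd i = 0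
  ψ_ψd : ∀ i j, i < n → j < n → i ≠ j → ψ i * ψd j + ψd j * ψ i = 0
  rel_q : ∀ i, i < n → ψ i * ψd i + q • (ψd i * ψ i) = vinv i
  rel_qinv : ∀ i, i < n → ψ i * ψd i + q⁻¹ • (ψd i * ψ i) = v i

/-- If `c` is invertible (with two-sided inverse `d`) and commutes with `x`,
then `d` commutes with `x`. -/
private lemma comm_inv {A : Type*} [Ring A] {x c d : A}
    (h1 : c * d = 1) (h2 : d * c = 1) (hcx : c * x = x * c) : d * x = x * d := by
  calc d * x = d * x * (c * d) := by rw [h1, mul_one]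
    _ = d * (x * c) * d := by simp only [mul_assoc]
    _ = d * (c * x) * d := by rw [hcx]
    _ = (d * c) * (x * d) := by simp only [mul_assoc]
    _ = x * d := by rw [h2, one_mul]

/-- In `Cl_q(n)`, for `1 ≤ i ≤ n-1` (here 0-indexed: `i+1 < n`),
`[ψ_i ψ_{i+1}†, ψ_{i+1} ψ_i†] = (v_i v_{i+1}⁻¹ - v_i⁻¹ v_{i+1})/(q - q⁻¹)`. -/
theorem stmt1 {K A : Type*} [Field K] [Ring A] [Algebra K A]
    (q : K) (hq0 : q ≠ 0) (hq1 : q ^ 2 ≠ 1)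
    (n : ℕ) (ψ ψd v vinv : ℕ → A)
    (h : CliffordRel K A q n ψ ψd v vinv) :
    ∀ i, i + 1 < n →
      (ψ i * ψd (i+1)) * (ψ (i+1) * ψd i) - (ψ (i+1) * ψd i) * (ψ i * ψd (i+1)) =
        (q - q⁻¹)⁻¹ • (v i * vinv (i+1) - vinv i * v (i+1)) := by
  intro i hj
  have hi : i < n := Nat.lt_of_succ_lt hj
  have hij : i ≠ i + 1 := Nat.ne_of_lt (Nat.lt_succ_self i)
  have hji : i + 1 ≠ i := hij.symm
  have hs : q - q⁻¹ ≠ 0 := by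
    intro h0
    apply hq1
    have hq : q = q⁻¹ := sub_eq_zero.mp h0
    calc q ^ 2 = q * q := sq q
      _ = q * q⁻¹ := by rw [← hq]
      _ = 1 := mul_inv_cancel₀ hq0
  -- products ψd ψ and ψ ψd in terms of v, vinv
  have hX : ∀ k, k < n → (q - q⁻¹) • (ψd k * ψ k) = vinv k - v k := by
    intro k hk
    rw [← h.rel_q k hk, ← h.rel_qinv k hk, sub_smul]
    abel
  have hY : ∀ k, k < n → (q - q⁻¹) • (ψ k * ψd k) = q • v k - q⁻¹ • vinv k := by
    intro k hk
    rw [← h.rel_q k hk, ← h.rel_qinv k hk]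
    simp only [smul_add, smul_smul, mul_inv_cancel₀ hq0, inv_mul_cancel₀ hq0, sub_smul, one_smul]
    abel
  -- commutation lemmas
  have cψ : ∀ a b, a < n → b < n → a ≠ b → v a * ψ b = ψ b * v a := by
    intro a b ha hb hab
    have := h.v_ψ a b ha hb
    rwa [if_neg hab, one_smul] at this
  have cψd : ∀ a b, a < n → b < n → a ≠ b → v a * ψd b = ψd b * v a := by
    intro a b ha hb hab
    have := h.v_ψd a b ha hb
    rwa [if_neg hab, one_smul] at this
  have cinvψ : ∀ a b, a < n → b < n → a ≠ b → vinv a * ψ b = ψ b * vinv a := by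
    intro a b ha hb hab
    exact comm_inv (h.v_vinv a ha) (h.vinv_v a ha) (cψ a b ha hb hab)
  have cinvψd : ∀ a b, a < n → b < n → a ≠ b → vinv a * ψd b = ψd b * vinv a := by
    intro a b ha hb hab
    exact comm_inv (h.v_vinv a ha) (h.vinv_v a ha) (cψd a b ha hb hab)
  -- v/vinv commutation
  have c1 : v (i+1) * v i = v i * v (i+1) := h.v_comm (i+1) i hj hi
  have c2 : vinv (i+1) * v i = v i * vinv (i+1) :=
    comm_inv (h.v_vinv (i+1) hj) (h.vinv_v (i+1) hj) c1
  have c3 : vinv i * v (i+1) = v (i+1) * vinv i :=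
    comm_inv (h.v_vinv i hi) (h.vinv_v i hi) c1.symm
  have c4 : vinv (i+1) * vinv i = vinv i * vinv (i+1) :=
    comm_inv (h.v_vinv (i+1) hj) (h.vinv_v (i+1) hj) c3.symm
  -- the two products, with denominators cleared
  have hAB : (q - q⁻¹) • ((q - q⁻¹) • (ψ i * ψd (i+1) * (ψ (i+1) * ψd i))) =
      (vinv (i+1) - v (i+1)) * (q • v i - q⁻¹ • vinv i) := by
    have e1 : ψ i * ψd (i+1) * (ψ (i+1) * ψd i) = ψ i * (ψd (i+1) * ψ (i+1)) * ψd i := by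
      noncomm_ring
    have e2 : (q - q⁻¹) • (ψ i * (ψd (i+1) * ψ (i+1)) * ψd i) =
        ψ i * ((q - q⁻¹) • (ψd (i+1) * ψ (i+1))) * ψd i := by
      simp only [mul_smul_comm, smul_mul_assoc]
    rw [e1, e2, hX (i+1) hj]
    have a1 : ψ i * vinv (i+1) = vinv (i+1) * ψ i := (cinvψ (i+1) i hj hi hji).symm
    have a2 : ψ i * v (i+1) = v (i+1) * ψ i := (cψ (i+1) i hj hi hji).symm
    have e3 : ψ i * (vinv (i+1) - v (i+1)) * ψd i =
        (vinv (i+1) - v (i+1)) * (ψ i * ψd i) := by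
      simp only [mul_sub, sub_mul, a1, a2, mul_assoc]
    rw [e3, ← mul_smul_comm, hY i hi]
  have hBA : (q - q⁻¹) • ((q - q⁻¹) • (ψ (i+1) * ψd i * (ψ i * ψd (i+1)))) =
      (vinv i - v i) * (q • v (i+1) - q⁻¹ • vinv (i+1)) := by
    have e1 : ψ (i+1) * ψd i * (ψ i * ψd (i+1)) = ψ (i+1) * (ψd i * ψ i) * ψd (i+1) := by
      noncomm_ring
    have e2 : (q - q⁻¹) • (ψ (i+1) * (ψd i * ψ i) * ψd (i+1)) =
        ψ (i+1) * ((q - q⁻¹) • (ψd i * ψ i)) * ψd (i+1) := by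
      simp only [mul_smul_comm, smul_mul_assoc]
    rw [e1, e2, hX i hi]
    have a1 : ψ (i+1) * vinv i = vinv i * ψ (i+1) := (cinvψ i (i+1) hi hj hij).symm
    have a2 : ψ (i+1) * v i = v i * ψ (i+1) := (cψ i (i+1) hi hj hij).symm
    have e3 : ψ (i+1) * (vinv i - v i) * ψd (i+1) =
        (vinv i - v i) * (ψ (i+1) * ψd (i+1)) := by
      simp only [mul_sub, sub_mul, a1, a2, mul_assoc]
    rw [e3, ← mul_smul_comm, hY (i+1) hj]
  -- combine
  have key : (q - q⁻¹) • ((q - q⁻¹) •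
      ((ψ i * ψd (i+1)) * (ψ (i+1) * ψd i) - (ψ (i+1) * ψd i) * (ψ i * ψd (i+1)))) =
      (q - q⁻¹) • (v i * vinv (i+1) - vinv i * v (i+1)) := by
    rw [smul_sub, smul_sub, hAB, hBA]
    simp only [mul_sub, sub_mul, mul_smul_comm, smul_mul_assoc, c1, c2, c3, c4]
    module
  have key2 : (q - q⁻¹) •
      ((ψ i * ψd (i+1)) * (ψ (i+1) * ψd i) - (ψ (i+1) * ψd i) * (ψ i * ψd (i+1))) =
      v i * vinv (i+1) - vinv i * v (i+1) := by
    have := congrArg (fun x => (q - q⁻¹)⁻¹ • x) key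
    simpa [inv_smul_smul₀ hs] using this
  calc (ψ i * ψd (i+1)) * (ψ (i+1) * ψd i) - (ψ (i+1) * ψd i) * (ψ i * ψd (i+1))
      = (q - q⁻¹)⁻¹ • ((q - q⁻¹) •
        ((ψ i * ψd (i+1)) * (ψ (i+1) * ψd i) - (ψ (i+1) * ψd i) * (ψ i * ψd (i+1)))) := by
        rw [inv_smul_smul₀ hs]
    _ = (q - q⁻¹)⁻¹ • (v i * vinv (i+1) - vinv i * v (i+1)) := by rw [key2]
end

section
/- In the deformed Clifford algebra Cl_q(n), with E_i = ψ_i ψ_{i+1}† for 1 ≤ i ≤ n-1, the quantum Serre relation E_{i-1}² E_i - (q + q^{-1}) E_{i-1} E_i E_{i-1} + E_i E_{i-1}² = 0 holds for all 2 ≤ i ≤ n-1. -/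

lemma smul_cancel' {K A : Type*} [Field K] [AddCommMonoid A] [Module K A]
    {c : K} (hc : c ≠ 0) {x : A} (h : c • x = 0) : x = 0 := by
  have := congrArg (c⁻¹ • ·) h
  simpa [smul_smul, inv_mul_cancel₀ hc] using this

lemma psi_sq_zero {K A : Type*} [Field K] [Ring A] [Algebra K A]
    (q : K) (hq0 : q ≠ 0) (hq1 : q ^ 2 ≠ 1)
    (a b V W : A)
    (R1 : a*b + q•(b*a) = W) (R2 : a*b + q⁻¹•(b*a) = V)
    (R3 : V*a = q•(a*V)) (R4 : V*W = 1) (R5 : W*V = 1)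
    (htor : a*a + a*a = 0) : a * a = 0 := by
  by_cases hc : q*q = q⁻¹*q⁻¹
  · -- then q² = -1, so char ≠ 2
    have hqq : q*q ≠ 0 := mul_ne_zero hq0 hq0
    have h4 : (q*q)*(q*q) = 1 := by
      field_simp at hc
      linear_combination hc
    have hfac : (q*q - 1)*(q*q + 1) = 0 := by linear_combination h4
    have hne1 : q*q - 1 ≠ 0 := by
      intro e; exact hq1 (by rw [sq]; linear_combination e)
    have hneg : q*q + 1 = 0 := by
      rcases mul_eq_zero.mp hfac with e | e
      · exact absurd e hne1
      · exact e
    have h2 : (2:K) ≠ 0 := by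
      intro h2
      exact hne1 (by linear_combination hneg - h2)
    have hs : (2:K) • (a*a) = 0 := by rw [two_smul]; exact htor
    exact smul_cancel' h2 hs
  · have hiq : q⁻¹ ≠ 0 := inv_ne_zero hq0
    have hW : a*W = q•(W*a) := by
      calc a*W = (W*V)*(a*W) := by rw [R5, one_mul]
        _ = W*((V*a)*W) := by rw [mul_assoc, ← mul_assoc V a W]
        _ = W*((q•(a*V))*W) := by rw [R3]
        _ = q•(W*(a*(V*W))) := by
            simp only [smul_mul_assoc, mul_smul_comm, mul_assoc]
        _ = q•(W*a) := by rw [R4, mul_one]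
    have hWa : W*a = q⁻¹•(a*W) := by
      rw [hW, smul_smul, inv_mul_cancel₀ hq0, one_smul]
    have hba1 : b*a = q⁻¹•W - q⁻¹•(a*b) := by
      have h1 : q•(b*a) = W - a*b := eq_sub_of_add_eq' R1
      have := congrArg (q⁻¹ • ·) h1
      simpa [smul_smul, inv_mul_cancel₀ hq0, smul_sub] using this
    have hba2 : b*a = q•V - q•(a*b) := by
      have h1 : q⁻¹•(b*a) = V - a*b := eq_sub_of_add_eq' R2
      have := congrArg (q • ·) h1
      simpa [smul_smul, mul_inv_cancel₀ hq0, smul_sub] using this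
    have key1 : (b*a)*a = (q⁻¹*q⁻¹)•(a*(a*b)) := by
      calc (b*a)*a = (q⁻¹•W - q⁻¹•(a*b))*a := by rw [hba1]
        _ = q⁻¹•(W*a) - q⁻¹•(a*(b*a)) := by
            rw [sub_mul, smul_mul_assoc, smul_mul_assoc, mul_assoc]
        _ = q⁻¹•(q⁻¹•(a*W)) - q⁻¹•(a*(q⁻¹•W - q⁻¹•(a*b))) := by rw [hWa, hba1]
        _ = (q⁻¹*q⁻¹)•(a*(a*b)) := by
            rw [mul_sub, mul_smul_comm, mul_smul_comm, smul_sub, smul_smul, smul_smul]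
            abel
    have key2 : (b*a)*a = (q*q)•(a*(a*b)) := by
      calc (b*a)*a = (q•V - q•(a*b))*a := by rw [hba2]
        _ = q•(V*a) - q•(a*(b*a)) := by
            rw [sub_mul, smul_mul_assoc, smul_mul_assoc, mul_assoc]
        _ = q•(q•(a*V)) - q•(a*(q•V - q•(a*b))) := by rw [R3, hba2]
        _ = (q*q)•(a*(a*b)) := by
            rw [mul_sub, mul_smul_comm, mul_smul_comm, smul_sub, smul_smul, smul_smul]
            abel
    have hsub : (q⁻¹*q⁻¹ - q*q)•(a*(a*b)) = 0 := by
      rw [sub_smul, ← key1, ← key2, sub_self]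
    have hne : q⁻¹*q⁻¹ - q*q ≠ 0 :=
      sub_ne_zero_of_ne (fun e => hc e.symm)
    have haab : a*(a*b) = 0 := smul_cancel' hne hsub
    have h5 : a*(a*(b*a)) = 0 := by
      rw [← mul_assoc a b a, ← mul_assoc a (a*b) a, haab, zero_mul]
    have haaW : a*(a*W) = 0 := by
      have e : a*(a*(b*a)) = q⁻¹•(a*(a*W)) - q⁻¹•(a*(a*(a*b))) := by
        rw [hba1, mul_sub, mul_sub, mul_smul_comm, mul_smul_comm, mul_smul_comm, mul_smul_comm]
      rw [h5, haab, mul_zero, smul_zero, sub_zero] at e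
      exact smul_cancel' hiq e.symm
    calc a*a = (a*(a*W))*V := by
          rw [mul_assoc, mul_assoc a W V, R5, mul_one]
      _ = 0 := by rw [haaW, zero_mul]

/-- In `Cl_q(n)`, with `E_i = ψ_i ψ_{i+1}†`, the quantum Serre relation
`E_{i-1}² E_i - (q + q⁻¹) E_{i-1} E_i E_{i-1} + E_i E_{i-1}² = 0` holds for `2 ≤ i ≤ n-1`
(0-indexed: `1 ≤ i` and `i+1 < n`). -/
theorem stmt5 {K A : Type*} [Field K] [Ring A] [Algebra K A]
    (q : K) (hq0 : q ≠ 0) (hq1 : q ^ 2 ≠ 1)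
    (n : ℕ) (ψ ψd v vinv : ℕ → A)
    (h : CliffordRel K A q n ψ ψd v vinv) :
    ∀ i, 1 ≤ i → i + 1 < n →
      (ψ (i-1) * ψd i) ^ 2 * (ψ i * ψd (i+1))
        - (q + q⁻¹) • ((ψ (i-1) * ψd i) * (ψ i * ψd (i+1)) * (ψ (i-1) * ψd i))
        + (ψ i * ψd (i+1)) * (ψ (i-1) * ψd i) ^ 2 = 0 := by
  intro i hi hin
  have hi1 : i - 1 < n := by omega
  have hii : i < n := by omega
  have hi2 : i + 1 < n := by omega
  have hne1 : i - 1 ≠ i := by omega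
  have hne2 : i - 1 ≠ i + 1 := by omega
  set a := ψ (i-1) with ha
  set b := ψd i with hb
  set c := ψ i with hcdef
  set d := ψd (i+1) with hd
  -- ψ_{i-1}² = 0
  have haa : a * a = 0 := by
    refine psi_sq_zero q hq0 hq1 a (ψd (i-1)) (v (i-1)) (vinv (i-1))
      (h.rel_q _ hi1) (h.rel_qinv _ hi1) ?_ (h.v_vinv _ hi1) (h.vinv_v _ hi1)
      (h.ψ_ψ _ _ hi1 hi1)
    simpa using h.v_ψ (i-1) (i-1) hi1 hi1
  -- anticommutation relations
  have hba : b * a = -(a * b) :=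
    eq_neg_of_add_eq_zero_right (h.ψ_ψd (i-1) i hi1 hii hne1)
  have hca : c * a = -(a * c) :=
    eq_neg_of_add_eq_zero_right (h.ψ_ψ (i-1) i hi1 hii)
  have hda : d * a = -(a * d) :=
    eq_neg_of_add_eq_zero_right (h.ψ_ψd (i-1) (i+1) hi1 hi2 hne2)
  -- E_{i-1}² = 0
  have hEE : (a*b)*(a*b) = 0 := by
    rw [mul_assoc, ← mul_assoc b a b, hba, neg_mul, mul_neg, ← mul_assoc,
      ← mul_assoc, haa, zero_mul, zero_mul, neg_zero]
  -- (c*d) commutes with a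
  have hcda : (c*d)*a = a*(c*d) := by
    rw [mul_assoc, hda, mul_neg, ← mul_assoc, hca, neg_mul, neg_neg, mul_assoc]
  -- E_{i-1} E_i E_{i-1} = 0
  have hEFE : (a*b)*(c*d)*(a*b) = 0 := by
    rw [mul_assoc (a*b) (c*d) (a*b), ← mul_assoc (c*d) a b, hcda,
      ← mul_assoc, ← mul_assoc, mul_assoc a b a, hba, mul_neg, ← mul_assoc a a b,
      haa, zero_mul, neg_zero, zero_mul, zero_mul]
  rw [sq, hEE, hEFE, zero_mul, mul_zero, smul_zero, sub_zero, add_zero]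
end

section
/- The Fock space V_q(n) with basis |r⟩ for r ∈ {0,1}^n, equipped with the actions v_i |r⟩ = q^{-r_i} |r⟩, ψ_i |r⟩ = (-1)^{r_1+⋯+r_{i-1}} |r - e_i⟩, and ψ_i† |r⟩ = (-1)^{r_1+⋯+r_{i-1}} |r + e_i⟩ (with |r ± e_i⟩ = 0 when r_i ± 1 ∉ {0,1}), is a well-defined module for the deformed Clifford algebra Cl_q(n), i.e., these operators satisfy all defining relations of Cl_q(n). -/
open Finset in
/-- The sign `(-1)^{r_1 + ⋯ + r_{i-1}}` appearing in the Fock space action. -/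
def fockSgn {K : Type*} [Field K] {n : ℕ} (r : Fin n → Fin 2) (i : Fin n) : K :=
  (-1) ^ (∑ j : Fin n, if (j : ℕ) < (i : ℕ) then ((r j : ℕ)) else 0)

/-- The Fock space `V_q(n)`, with basis `|r⟩` for `r ∈ {0,1}ⁿ`, realised as the space of
`K`-valued functions on `{0,1}ⁿ` (`f r` is the coefficient of `|r⟩`). -/
def FockV (K : Type*) [Field K] (n : ℕ) : Type _ := (Fin n → Fin 2) → K

noncomputable instance (K : Type*) [Field K] (n : ℕ) : AddCommGroup (FockV K n) :=
  inferInstanceAs (AddCommGroup ((Fin n → Fin 2) → K))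
noncomputable instance (K : Type*) [Field K] (n : ℕ) : Module K (FockV K n) :=
  inferInstanceAs (Module K ((Fin n → Fin 2) → K))

/-- The operator `ψ_i` on the Fock space: `ψ_i |r⟩ = (-1)^{r_1+⋯+r_{i-1}} |r - e_i⟩`. -/
def ψop {K : Type*} [Field K] {n : ℕ} (i : Fin n) (f : FockV K n) : FockV K n :=
  fun r => if r i = 0 then fockSgn r i * f (Function.update r i 1) else 0

/-- The operator `ψ_i†` on the Fock space: `ψ_i† |r⟩ = (-1)^{r_1+⋯+r_{i-1}} |r + e_i⟩`. -/
def ψdop {K : Type*} [Field K] {n : ℕ} (i : Fin n) (f : FockV K n) : FockV K n :=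
  fun r => if r i = 1 then fockSgn r i * f (Function.update r i 0) else 0

/-- The operator `v_i` on the Fock space: `v_i |r⟩ = q^{-r_i} |r⟩`. -/
def vop {K : Type*} [Field K] {n : ℕ} (q : K) (i : Fin n) (f : FockV K n) : FockV K n :=
  fun r => q⁻¹ ^ ((r i : ℕ)) * f r

/-- The operator `v_i⁻¹` on the Fock space: `v_i⁻¹ |r⟩ = q^{r_i} |r⟩`. -/
def vinvop {K : Type*} [Field K] {n : ℕ} (q : K) (i : Fin n) (f : FockV K n) : FockV K n :=
  fun r => q ^ ((r i : ℕ)) * f r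

section Aux
variable {K : Type*} [Field K] {n : ℕ}

lemma fin2 (x : Fin 2) : x = 0 ∨ x = 1 := by omega

lemma fockSgn_mul_self (r : Fin n → Fin 2) (i : Fin n) :
    fockSgn (K := K) r i * fockSgn r i = 1 := by
  unfold fockSgn
  rw [← pow_add]
  exact Even.neg_one_pow ⟨_, rfl⟩

lemma fockSgn_update_of_le (r : Fin n → Fin 2) {i j : Fin n} (v : Fin 2)
    (h : (i : ℕ) ≤ (j : ℕ)) : fockSgn (K := K) (Function.update r j v) i = fockSgn r i := by
  unfold fockSgn
  congr 1
  refine Finset.sum_congr rfl fun k _ => ?_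
  split_ifs with hk
  · rw [Function.update_of_ne (by intro hkj; rw [hkj] at hk; omega)]
  · rfl

lemma fockSgn_update_of_lt (r : Fin n → Fin 2) {i j : Fin n} (v : Fin 2)
    (h : (j : ℕ) < (i : ℕ)) :
    fockSgn (K := K) (Function.update r j v) i
      = (-1) ^ (v : ℕ) * ((-1) ^ ((r j : ℕ)) * fockSgn r i) := by
  have key : ∀ (s : Fin n → Fin 2),
      (∑ k : Fin n, if (k : ℕ) < (i : ℕ) then ((s k : ℕ)) else 0)
        = (s j : ℕ) + ∑ k ∈ Finset.univ.erase j,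
            (if (k : ℕ) < (i : ℕ) then ((s k : ℕ)) else 0) := by
    intro s
    rw [← Finset.add_sum_erase _ _ (Finset.mem_univ j), if_pos h]
  unfold fockSgn
  rw [key, key]
  have h2 : ∑ k ∈ Finset.univ.erase j,
      (if (k : ℕ) < (i : ℕ) then ((Function.update r j v k : ℕ)) else 0)
      = ∑ k ∈ Finset.univ.erase j, (if (k : ℕ) < (i : ℕ) then ((r k : ℕ)) else 0) :=
    Finset.sum_congr rfl fun k hk => by
      rw [Function.update_of_ne (Finset.ne_of_mem_erase hk)]
  have hc : ((-1 : K)) ^ ((r j : ℕ)) * (-1) ^ ((r j : ℕ)) = 1 := by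
    rw [← pow_add]; exact Even.neg_one_pow ⟨_, rfl⟩
  rw [h2, Function.update_self, pow_add, pow_add,
    ← mul_assoc ((-1 : K) ^ ((r j : ℕ))), hc, one_mul]

lemma psi_psid_apply (i : Fin n) (f : FockV K n) (r : Fin n → Fin 2) :
    ψop i (ψdop i f) r = if r i = 0 then f r else 0 := by
  by_cases h : r i = 0
  · have hu : Function.update r i 0 = r := by
      conv_rhs => rw [← Function.update_eq_self i r]
      rw [h]
    simp only [ψop, ψdop, h, if_pos, Function.update_self, Function.update_idem, if_true, hu,
      fockSgn_update_of_le _ _ le_rfl]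
    rw [← mul_assoc, fockSgn_mul_self, one_mul]
  · simp [ψop, ψdop, h]

lemma psid_psi_apply (i : Fin n) (f : FockV K n) (r : Fin n → Fin 2) :
    ψdop i (ψop i f) r = if r i = 1 then f r else 0 := by
  by_cases h : r i = 1
  · have hu : Function.update r i 1 = r := by
      conv_rhs => rw [← Function.update_eq_self i r]
      rw [h]
    simp only [ψop, ψdop, h, if_pos, Function.update_self, Function.update_idem, if_true, hu,
      fockSgn_update_of_le _ _ le_rfl]
    rw [← mul_assoc, fockSgn_mul_self, one_mul]
  · simp [ψop, ψdop, h]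

lemma psi_psi_apply {i j : Fin n} (hij : (i : ℕ) < (j : ℕ)) (f : FockV K n)
    (r : Fin n → Fin 2) : ψop i (ψop j f) r + ψop j (ψop i f) r = 0 := by
  have hne : j ≠ i := fun h => by rw [h] at hij; exact lt_irrefl _ hij
  have hne' : i ≠ j := fun h => hne h.symm
  simp only [ψop]
  rw [Function.update_of_ne hne, Function.update_of_ne hne']
  by_cases h0 : r i = 0 <;> by_cases h1 : r j = 0
  · rw [if_pos h0, if_pos h1, if_pos h1, if_pos h0,
      fockSgn_update_of_lt _ _ hij, fockSgn_update_of_le _ _ hij.le,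
      Function.update_comm hne', h0]
    simp only [Fin.val_zero, Fin.val_one, pow_zero, pow_one, one_mul]
    ring
  · simp [h0, h1]
  · simp [h0, h1]
  · simp [h0, h1]

lemma psid_psid_apply {i j : Fin n} (hij : (i : ℕ) < (j : ℕ)) (f : FockV K n)
    (r : Fin n → Fin 2) : ψdop i (ψdop j f) r + ψdop j (ψdop i f) r = 0 := by
  have hne : j ≠ i := fun h => by rw [h] at hij; exact lt_irrefl _ hij
  have hne' : i ≠ j := fun h => hne h.symm
  simp only [ψdop]
  rw [Function.update_of_ne hne, Function.update_of_ne hne']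
  by_cases h0 : r i = 1 <;> by_cases h1 : r j = 1
  · rw [if_pos h0, if_pos h1, if_pos h1, if_pos h0,
      fockSgn_update_of_lt _ _ hij, fockSgn_update_of_le _ _ hij.le,
      Function.update_comm hne', h0]
    simp only [Fin.val_zero, Fin.val_one, pow_zero, pow_one, one_mul]
    ring
  · simp [h0, h1]
  · simp [h0, h1]
  · simp [h0, h1]

lemma psi_psid_ne_lt {i j : Fin n} (hij : (i : ℕ) < (j : ℕ)) (f : FockV K n)
    (r : Fin n → Fin 2) : ψop i (ψdop j f) r + ψdop j (ψop i f) r = 0 := by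
  have hne : j ≠ i := fun h => by rw [h] at hij; exact lt_irrefl _ hij
  have hne' : i ≠ j := fun h => hne h.symm
  simp only [ψop, ψdop]
  rw [Function.update_of_ne hne, Function.update_of_ne hne']
  by_cases h0 : r i = 0 <;> by_cases h1 : r j = 1
  · rw [if_pos h0, if_pos h1, if_pos h1, if_pos h0,
      fockSgn_update_of_lt _ _ hij, fockSgn_update_of_le _ _ hij.le,
      Function.update_comm hne', h0]
    simp only [Fin.val_zero, Fin.val_one, pow_zero, pow_one, one_mul]
    ring
  · simp [h0, h1]
  · simp [h0, h1]
  · simp [h0, h1]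

lemma psi_psid_ne_gt {i j : Fin n} (hij : (j : ℕ) < (i : ℕ)) (f : FockV K n)
    (r : Fin n → Fin 2) : ψop i (ψdop j f) r + ψdop j (ψop i f) r = 0 := by
  have hne : j ≠ i := fun h => by rw [h] at hij; exact lt_irrefl _ hij
  have hne' : i ≠ j := fun h => hne h.symm
  simp only [ψop, ψdop]
  rw [Function.update_of_ne hne, Function.update_of_ne hne']
  by_cases h0 : r i = 0 <;> by_cases h1 : r j = 1
  · rw [if_pos h0, if_pos h1, if_pos h1, if_pos h0,
      fockSgn_update_of_lt _ _ hij, fockSgn_update_of_le _ _ hij.le,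
      Function.update_comm hne', h1]
    simp only [Fin.val_zero, Fin.val_one, pow_zero, pow_one, one_mul]
    ring
  · simp [h0, h1]
  · simp [h0, h1]
  · simp [h0, h1]

end Aux

/-- The Fock space `V_q(n)` with the given actions of `ψ_i`, `ψ_i†`, `v_i^{±1}`
is a well-defined module over `Cl_q(n)`: the operators are `K`-linear and satisfy all the
defining relations of the deformed Clifford algebra. -/
theorem stmt7 {K : Type*} [Field K] (q : K) (hq0 : q ≠ 0) (hq1 : q ^ 2 ≠ 1) (n : ℕ) :
    (∀ i : Fin n, IsLinearMap K (ψop (K := K) i)) ∧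
    (∀ i : Fin n, IsLinearMap K (ψdop (K := K) i)) ∧
    (∀ i : Fin n, IsLinearMap K (vop q i)) ∧
    (∀ i : Fin n, IsLinearMap K (vinvop q i)) ∧
    (∀ (i j : Fin n) (f : FockV K n), vop q i (vop q j f) = vop q j (vop q i f)) ∧
    (∀ (i : Fin n) (f : FockV K n), vop q i (vinvop q i f) = f) ∧
    (∀ (i : Fin n) (f : FockV K n), vinvop q i (vop q i f) = f) ∧
    (∀ (i j : Fin n) (f : FockV K n),
      vop q i (ψop j f) = (if i = j then q else 1) • ψop j (vop q i f)) ∧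
    (∀ (i j : Fin n) (f : FockV K n),
      vop q i (ψdop j f) = (if i = j then q⁻¹ else 1) • ψdop j (vop q i f)) ∧
    (∀ (i j : Fin n) (f : FockV K n), ψop i (ψop j f) + ψop j (ψop i f) = 0) ∧
    (∀ (i j : Fin n) (f : FockV K n), ψdop i (ψdop j f) + ψdop j (ψdop i f) = 0) ∧
    (∀ (i j : Fin n) (f : FockV K n), i ≠ j → ψop i (ψdop j f) + ψdop j (ψop i f) = 0) ∧
    (∀ (i : Fin n) (f : FockV K n),
      ψop i (ψdop i f) + q • ψdop i (ψop i f) = vinvop q i f) ∧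
    (∀ (i : Fin n) (f : FockV K n),
      ψop i (ψdop i f) + q⁻¹ • ψdop i (ψop i f) = vop q i f) := by

  have hqq : q * q⁻¹ = 1 := mul_inv_cancel₀ hq0
  refine ⟨?_, ?_, ?_, ?_, ?_, ?_, ?_, ?_, ?_, ?_, ?_, ?_, ?_, ?_⟩
  · -- ψop linear
    intro i
    refine ⟨fun f g => ?_, fun c f => ?_⟩
    · funext r
      show (if r i = 0 then fockSgn r i * (f _ + g _) else 0) = _ + _
      simp only [ψop]
      split_ifs <;> ring
    · funext r
      show (if r i = 0 then fockSgn r i * (c * f _) else 0) = c * _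
      simp only [ψop]
      split_ifs <;> ring
  · -- ψdop linear
    intro i
    refine ⟨fun f g => ?_, fun c f => ?_⟩
    · funext r
      show (if r i = 1 then fockSgn r i * (f _ + g _) else 0) = _ + _
      simp only [ψdop]
      split_ifs <;> ring
    · funext r
      show (if r i = 1 then fockSgn r i * (c * f _) else 0) = c * _
      simp only [ψdop]
      split_ifs <;> ring
  · -- vop linear
    intro i
    refine ⟨fun f g => ?_, fun c f => ?_⟩
    · funext r; show q⁻¹ ^ _ * (f r + g r) = _ * f r + _ * g r; ring
    · funext r; show q⁻¹ ^ _ * (c * f r) = c * (_ * f r); ring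
  · -- vinvop linear
    intro i
    refine ⟨fun f g => ?_, fun c f => ?_⟩
    · funext r; show q ^ _ * (f r + g r) = _ * f r + _ * g r; ring
    · funext r; show q ^ _ * (c * f r) = c * (_ * f r); ring
  · -- vop commute
    intro i j f; funext r
    show q⁻¹ ^ _ * (q⁻¹ ^ _ * f r) = q⁻¹ ^ _ * (q⁻¹ ^ _ * f r)
    ring
  · -- vop ∘ vinvop = id
    intro i f; funext r
    show q⁻¹ ^ ((r i : ℕ)) * (q ^ ((r i : ℕ)) * f r) = f r
    rw [← mul_assoc, ← mul_pow, inv_mul_cancel₀ hq0, one_pow, one_mul]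
  · -- vinvop ∘ vop = id
    intro i f; funext r
    show q ^ ((r i : ℕ)) * (q⁻¹ ^ ((r i : ℕ)) * f r) = f r
    rw [← mul_assoc, ← mul_pow, hqq, one_pow, one_mul]
  · -- vop-ψop commutation
    intro i j f
    by_cases hij : i = j
    · subst hij
      rw [if_pos rfl]
      funext r
      show q⁻¹ ^ ((r i : ℕ)) * (ψop i f r) = q * (ψop i (vop q i f) r)
      simp only [ψop, vop, Function.update_self]
      by_cases h : r i = 0
      · rw [if_pos h, if_pos h, h]
        simp only [Fin.val_zero, Fin.val_one, pow_zero, pow_one, one_mul]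
        field_simp
      · rw [if_neg h, if_neg h]; ring
    · rw [if_neg hij]
      funext r
      show q⁻¹ ^ ((r i : ℕ)) * (ψop j f r) = 1 * (ψop j (vop q i f) r)
      have hne : i ≠ j := hij
      simp only [ψop, vop, Function.update_of_ne hne]
      split_ifs <;> ring
  · -- vop-ψdop commutation
    intro i j f
    by_cases hij : i = j
    · subst hij
      rw [if_pos rfl]
      funext r
      show q⁻¹ ^ ((r i : ℕ)) * (ψdop i f r) = q⁻¹ * (ψdop i (vop q i f) r)
      simp only [ψdop, vop, Function.update_self]
      by_cases h : r i = 1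
      · rw [if_pos h, if_pos h, h]
        simp only [Fin.val_zero, Fin.val_one, pow_zero, pow_one, one_mul]
      · rw [if_neg h, if_neg h]; ring
    · rw [if_neg hij]
      funext r
      show q⁻¹ ^ ((r i : ℕ)) * (ψdop j f r) = 1 * (ψdop j (vop q i f) r)
      have hne : i ≠ j := hij
      simp only [ψdop, vop, Function.update_of_ne hne]
      split_ifs <;> ring
  · -- ψψ anticommute
    intro i j f
    funext r
    show ψop i (ψop j f) r + ψop j (ψop i f) r = 0
    rcases lt_trichotomy ((i : ℕ)) ((j : ℕ)) with h | h | h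
    · exact psi_psi_apply h f r
    · have : i = j := Fin.ext h
      subst this
      simp [ψop, Function.update_self]
    · rw [add_comm]; exact psi_psi_apply h f r
  · -- ψ†ψ† anticommute
    intro i j f
    funext r
    show ψdop i (ψdop j f) r + ψdop j (ψdop i f) r = 0
    rcases lt_trichotomy ((i : ℕ)) ((j : ℕ)) with h | h | h
    · exact psid_psid_apply h f r
    · have : i = j := Fin.ext h
      subst this
      simp [ψdop, Function.update_self]
    · rw [add_comm]; exact psid_psid_apply h f r
  · -- ψψ† anticommute, i ≠ j
    intro i j f hij
    funext r
    show ψop i (ψdop j f) r + ψdop j (ψop i f) r = 0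
    rcases lt_trichotomy ((i : ℕ)) ((j : ℕ)) with h | h | h
    · exact psi_psid_ne_lt h f r
    · exact absurd (Fin.ext h) hij
    · exact psi_psid_ne_gt h f r
  · -- relation with q
    intro i f
    funext r
    show ψop i (ψdop i f) r + q * (ψdop i (ψop i f) r) = q ^ ((r i : ℕ)) * f r
    rw [psi_psid_apply, psid_psi_apply]
    rcases fin2 (r i) with h | h <;> rw [h] <;> simp
  · -- relation with q⁻¹
    intro i f
    funext r
    show ψop i (ψdop i f) r + q⁻¹ * (ψdop i (ψop i f) r) = q⁻¹ ^ ((r i : ℕ)) * f r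
    rw [psi_psid_apply, psid_psi_apply]
    rcases fin2 (r i) with h | h <;> rw [h] <;> simp
end

section
/- There is an associative superalgebra homomorphism π from U_q(osp(1|2n), Θ₁) to the deformed Clifford algebra Cl_q(n) given by: e_i ↦ ψ_i ψ_{i+1}†, f_i ↦ ψ_{i+1} ψ_i†, k_i ↦ v_i v_{i+1}^{-1} for 1 ≤ i ≤ n-1, and e_n ↦ √(-1)(q^{1/2} - q^{-1/2})^{-1} ψ_n, f_n ↦ ψ_n†, k_n ↦ √(-1) q^{1/2} v_n; that is, the images of the generators satisfy all the defining relations of U_q(osp(1|2n), Θ₁). -/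
section ClHelpers
variable {K A : Type*} [Field K] [Ring A] [Algebra K A]

lemma flip_smul {a b : A} {c : K} (hc : c ≠ 0) (hab : a * b = c • (b * a)) :
    b * a = c⁻¹ • (a * b) := by
  rw [hab, smul_smul, inv_mul_cancel₀ hc, one_smul]

lemma conj_smul {u w a : A} {c : K} (huw : u * w = 1) (hwu : w * u = 1)
    (hc : c ≠ 0) (hua : u * a = c • (a * u)) : w * a = c⁻¹ • (a * w) := by
  have h1 : a * u = c⁻¹ • (u * a) := flip_smul hc hua
  calc w * a = w * (a * (u * w)) := by rw [huw, mul_one]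
    _ = w * ((a * u) * w) := by rw [mul_assoc]
    _ = w * ((c⁻¹ • (u * a)) * w) := by rw [h1]
    _ = c⁻¹ • ((w * u) * (a * w)) := by
        simp only [smul_mul_assoc, mul_smul_comm, mul_assoc]
    _ = c⁻¹ • (a * w) := by rw [hwu, one_mul]

lemma conj_comm {u w a : A} (huw : u * w = 1) (hwu : w * u = 1)
    (hua : u * a = a * u) : w * a = a * w := by
  calc w * a = w * (a * (u * w)) := by rw [huw, mul_one]
    _ = w * (u * (a * w)) := by rw [← mul_assoc a, ← hua, mul_assoc]
    _ = (w * u) * (a * w) := by rw [← mul_assoc]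
    _ = a * w := by rw [hwu, one_mul]

lemma comm_of_ac {a b c : A} (h1 : a * c = -(c * a)) (h2 : b * c = -(c * b)) :
    (a * b) * c = c * (a * b) := by
  rw [mul_assoc, h2, mul_neg, ← mul_assoc, h1, neg_mul, neg_neg, mul_assoc]

lemma smul_pass {a b₁ b₂ : A} {c₁ c₂ : K}
    (h1 : a * b₁ = c₁ • (b₁ * a)) (h2 : a * b₂ = c₂ • (b₂ * a)) :
    a * (b₁ * b₂) = (c₁ * c₂) • ((b₁ * b₂) * a) := by
  calc a * (b₁ * b₂) = (a * b₁) * b₂ := by rw [mul_assoc]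
    _ = c₁ • (b₁ * (a * b₂)) := by rw [h1, smul_mul_assoc, mul_assoc]
    _ = c₁ • (b₁ * (c₂ • (b₂ * a))) := by rw [h2]
    _ = (c₁ * c₂) • ((b₁ * b₂) * a) := by
        rw [mul_smul_comm, smul_smul, mul_assoc]

lemma smul_pass2 {a₁ a₂ B : A} {c₁ c₂ : K}
    (h1 : a₁ * B = c₁ • (B * a₁)) (h2 : a₂ * B = c₂ • (B * a₂)) :
    (a₁ * a₂) * B = (c₁ * c₂) • (B * (a₁ * a₂)) := by
  calc (a₁ * a₂) * B = a₁ * (a₂ * B) := by rw [mul_assoc]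
    _ = c₂ • ((a₁ * B) * a₂) := by rw [h2, mul_smul_comm, mul_assoc]
    _ = c₂ • ((c₁ • (B * a₁)) * a₂) := by rw [h1]
    _ = (c₁ * c₂) • (B * (a₁ * a₂)) := by
        rw [smul_mul_assoc, smul_smul, mul_comm c₂ c₁, mul_assoc]

lemma ac_ext {a b x : A} (hab : a * b + b * a = 0) :
    a * (b * x) = -(b * (a * x)) := by
  have hh : a * b = -(b * a) := eq_neg_of_add_eq_zero_left hab
  rw [← mul_assoc, hh, neg_mul, mul_assoc]

lemma ac_base {a b : A} (hab : a * b + b * a = 0) :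
    a * b = -(b * a) := eq_neg_of_add_eq_zero_left hab

lemma sq_ext {a : A} (ha : a * a = 0) (x : A) : a * (a * x) = 0 := by
  rw [← mul_assoc, ha, zero_mul]

lemma comm_of_ac4 {a b c d : A} (h1 : a * c = -(c * a)) (h2 : b * c = -(c * b))
    (h3 : a * d = -(d * a)) (h4 : b * d = -(d * b)) :
    (a * b) * (c * d) = (c * d) * (a * b) := by
  have hc : (a * b) * c = c * (a * b) := comm_of_ac h1 h2
  have hd : (a * b) * d = d * (a * b) := comm_of_ac h3 h4
  calc (a * b) * (c * d) = ((a * b) * c) * d := by rw [← mul_assoc]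
    _ = c * ((a * b) * d) := by rw [hc, mul_assoc]
    _ = c * (d * (a * b)) := by rw [hd]
    _ = (c * d) * (a * b) := by rw [← mul_assoc]

end ClHelpers

namespace CliffordRel

variable {K A : Type*} [Field K] [Ring A] [Algebra K A] {q : K} {n : ℕ}
  {ψ ψd v vinv : ℕ → A} (h : CliffordRel K A q n ψ ψd v vinv)

lemma qdiff_ne (hq0 : q ≠ 0) (hq1 : q ^ 2 ≠ 1) : q - q⁻¹ ≠ 0 := by
  intro hc
  apply hq1
  field_simp at hc
  rw [pow_two]
  linear_combination hc

lemma ite_ne (hq0 : q ≠ 0) (P : Prop) [Decidable P] : (if P then q else 1) ≠ 0 := by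
  split_ifs; exacts [hq0, one_ne_zero]

lemma ite_inv (P : Prop) [Decidable P] : (if P then q else 1 : K)⁻¹ = (if P then q⁻¹ else 1) := by
  split_ifs <;> simp

lemma ite_inv' (P : Prop) [Decidable P] : (if P then q⁻¹ else 1 : K)⁻¹ = (if P then q else 1) := by
  split_ifs with hp <;> simp

lemma ite_ne' (hq0 : q ≠ 0) (P : Prop) [Decidable P] : (if P then q⁻¹ else 1 : K) ≠ 0 := by
  split_ifs <;> simp [hq0]

include h

lemma ψ_v (hq0 : q ≠ 0) (i j : ℕ) (hi : i < n) (hj : j < n) :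
    ψ j * v i = (if i = j then q⁻¹ else 1) • (v i * ψ j) := by
  rw [← ite_inv]
  exact flip_smul (ite_ne hq0 _) (h.v_ψ i j hi hj)

lemma ψd_v (hq0 : q ≠ 0) (i j : ℕ) (hi : i < n) (hj : j < n) :
    ψd j * v i = (if i = j then q else 1) • (v i * ψd j) := by
  rw [← ite_inv' (q := q)]
  exact flip_smul (ite_ne' hq0 _) (h.v_ψd i j hi hj)

lemma vinv_ψ (hq0 : q ≠ 0) (i j : ℕ) (hi : i < n) (hj : j < n) :
    vinv i * ψ j = (if i = j then q⁻¹ else 1) • (ψ j * vinv i) := by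
  rw [← ite_inv]
  exact conj_smul (h.v_vinv i hi) (h.vinv_v i hi) (ite_ne hq0 _) (h.v_ψ i j hi hj)

lemma vinv_ψd (hq0 : q ≠ 0) (i j : ℕ) (hi : i < n) (hj : j < n) :
    vinv i * ψd j = (if i = j then q else 1) • (ψd j * vinv i) := by
  rw [← ite_inv' (q := q)]
  exact conj_smul (h.v_vinv i hi) (h.vinv_v i hi)
    (ite_ne' hq0 _) (h.v_ψd i j hi hj)

lemma ψ_vinv (hq0 : q ≠ 0) (i j : ℕ) (hi : i < n) (hj : j < n) :
    ψ j * vinv i = (if i = j then q else 1) • (vinv i * ψ j) := by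
  rw [← ite_inv' (q := q)]
  exact flip_smul (ite_ne' hq0 _) (h.vinv_ψ hq0 i j hi hj)

lemma ψd_vinv (hq0 : q ≠ 0) (i j : ℕ) (hi : i < n) (hj : j < n) :
    ψd j * vinv i = (if i = j then q⁻¹ else 1) • (vinv i * ψd j) := by
  rw [← ite_inv]
  exact flip_smul (ite_ne hq0 _) (h.vinv_ψd hq0 i j hi hj)

lemma v_vinv_comm (i j : ℕ) (hi : i < n) (hj : j < n) :
    v i * vinv j = vinv j * v i :=
  (conj_comm (h.v_vinv j hj) (h.vinv_v j hj) (h.v_comm j i hj hi)).symm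

lemma vinv_vinv_comm (i j : ℕ) (hi : i < n) (hj : j < n) :
    vinv i * vinv j = vinv j * vinv i :=
  (conj_comm (h.v_vinv j hj) (h.vinv_v j hj) (h.v_vinv_comm j i hj hi)).symm

lemma pair_X (hq0 : q ≠ 0) (hq1 : q ^ 2 ≠ 1) (i : ℕ) (hi : i < n) :
    ψd i * ψ i = (q - q⁻¹)⁻¹ • (vinv i - v i) := by
  have h1 := h.rel_q i hi
  have h2 := h.rel_qinv i hi
  have key : (q - q⁻¹) • (ψd i * ψ i) = vinv i - v i := by
    rw [← h1, ← h2]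
    module
  rw [← key, smul_smul, inv_mul_cancel₀ (qdiff_ne hq0 hq1), one_smul]


lemma pair_Y (hq0 : q ≠ 0) (hq1 : q ^ 2 ≠ 1) (i : ℕ) (hi : i < n) :
    ψ i * ψd i = (q - q⁻¹)⁻¹ • (q • v i - q⁻¹ • vinv i) := by
  have key : (q - q⁻¹) • (ψ i * ψd i) = q • v i - q⁻¹ • vinv i := by
    rw [← h.rel_q i hi, ← h.rel_qinv i hi]
    match_scalars <;> field_simp <;> ring
  rw [← key, smul_smul, inv_mul_cancel₀ (qdiff_ne hq0 hq1), one_smul]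

omit h in
lemma q21_ne (hq1 : q ^ 2 ≠ 1) (h2 : (2:K) = 0) : q * q + 1 ≠ 0 := by
  have e : q * q + 1 = (q - 1)^2 := by linear_combination q * h2
  rw [e]
  apply pow_ne_zero
  intro hq
  apply hq1
  rw [sub_eq_zero] at hq
  rw [hq]; norm_num

lemma ψ_sq (hq0 : q ≠ 0) (hq1 : q ^ 2 ≠ 1) (i : ℕ) (hi : i < n) :
    ψ i * ψ i = 0 := by
  by_cases h2 : (2 : K) = 0
  · -- characteristic 2 case
    have hqq := qdiff_ne (q := q) hq0 hq1
    have hq21 : q * q + 1 ≠ 0 := q21_ne hq1 h2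
    have hX := h.pair_X hq0 hq1 i hi
    have hY := h.pair_Y hq0 hq1 i hi
    have hua : v i * ψ i = q • (ψ i * v i) := by simpa using h.v_ψ i i hi hi
    have hwa : vinv i * ψ i = q⁻¹ • (ψ i * vinv i) := by
      simpa using h.vinv_ψ hq0 i i hi hi
    have assoc1 : (ψ i * ψd i) * ψ i = ψ i * (ψd i * ψ i) := mul_assoc _ _ _
    rw [hX, hY] at assoc1
    have eq1 : (q*q) • (ψ i * v i) - (q⁻¹*q⁻¹) • (ψ i * vinv i)
        = ψ i * vinv i - ψ i * v i := by
      have L : ((q-q⁻¹)⁻¹ • (q • v i - q⁻¹ • vinv i)) * ψ i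
          = (q - q⁻¹)⁻¹ • ((q*q) • (ψ i * v i) - (q⁻¹*q⁻¹) • (ψ i * vinv i)) := by
        rw [smul_mul_assoc, sub_mul, smul_mul_assoc, smul_mul_assoc, hua, hwa,
            smul_smul, smul_smul, smul_sub]
      have R : ψ i * ((q-q⁻¹)⁻¹ • (vinv i - v i))
          = (q-q⁻¹)⁻¹ • (ψ i * vinv i - ψ i * v i) := by
        rw [mul_smul_comm, mul_sub]
      rw [L, R] at assoc1
      have hc := congrArg (fun x => (q - q⁻¹) • x) assoc1
      simpa only [smul_smul, mul_inv_cancel₀ hqq, one_smul] using hc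
    have eq3 : ψ i * v i = (q⁻¹*q⁻¹) • (ψ i * vinv i) := by
      have eq2 : (q*q + 1) • (ψ i * v i) = (q⁻¹*q⁻¹ + 1) • (ψ i * vinv i) := by
        calc (q*q+1) • (ψ i * v i)
            = ((q*q) • (ψ i * v i) - (q⁻¹*q⁻¹) • (ψ i * vinv i)) + (ψ i * v i)
              + (q⁻¹*q⁻¹) • (ψ i * vinv i) := by module
          _ = (ψ i * vinv i - ψ i * v i) + (ψ i * v i)
              + (q⁻¹*q⁻¹) • (ψ i * vinv i) := by rw [eq1]
          _ = (q⁻¹*q⁻¹ + 1) • (ψ i * vinv i) := by module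
      calc ψ i * v i = (q*q+1)⁻¹ • ((q*q+1) • (ψ i * v i)) := by
            rw [smul_smul, inv_mul_cancel₀ hq21, one_smul]
        _ = (q*q+1)⁻¹ • ((q⁻¹*q⁻¹+1) • (ψ i * vinv i)) := by rw [eq2]
        _ = (q⁻¹*q⁻¹) • (ψ i * vinv i) := by
            rw [smul_smul]
            congr 1
            rw [show q⁻¹*q⁻¹+1 = q⁻¹*q⁻¹*(q*q+1) by
                  linear_combination (-(q⁻¹*q) - 1) * inv_mul_cancel₀ hq0,
              mul_comm (q*q+1)⁻¹, mul_inv_cancel_right₀ hq21]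
    have hu : ψ i * v i = ψ i * (ψ i * ψd i) + q⁻¹ • (ψ i * (ψd i * ψ i)) := by
      conv_lhs => rw [← h.rel_qinv i hi]
      rw [mul_add, mul_smul_comm]
    have hw : ψ i * vinv i = ψ i * (ψ i * ψd i) + q • (ψ i * (ψd i * ψ i)) := by
      conv_lhs => rw [← h.rel_q i hi]
      rw [mul_add, mul_smul_comm]
    have eq4 : ψ i * (ψ i * ψd i) + q⁻¹ • (ψ i * (ψd i * ψ i))
        = (q⁻¹*q⁻¹) • (ψ i * (ψ i * ψd i) + q • (ψ i * (ψd i * ψ i))) := by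
      rw [← hu, ← hw]; exact eq3
    have h1q : (1 : K) - q⁻¹*q⁻¹ ≠ 0 := by
      intro hc
      apply hq1
      field_simp at hc
      rw [pow_two]
      linear_combination hc
    have eq5 : (1 - q⁻¹*q⁻¹) • (ψ i * (ψ i * ψd i)) = 0 := by
      have e : (1 - q⁻¹*q⁻¹) • (ψ i * (ψ i * ψd i))
          = (ψ i * (ψ i * ψd i) + q⁻¹ • (ψ i * (ψd i * ψ i)))
            - (q⁻¹*q⁻¹) • (ψ i * (ψ i * ψd i) + q • (ψ i * (ψd i * ψ i))) := by
        match_scalars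
        · ring
        · field_simp
          ring
      rw [e, eq4, sub_self]
    have hab0 : ψ i * (ψ i * ψd i) = 0 := by
      have hc := congrArg (fun x => (1 - q⁻¹*q⁻¹)⁻¹ • x) eq5
      simpa only [smul_smul, inv_mul_cancel₀ h1q, one_smul, smul_zero] using hc
    have hu2 : (ψ i * ψ i) * v i = 0 := by
      calc (ψ i * ψ i) * v i = ψ i * (ψ i * v i) := mul_assoc _ _ _
        _ = ψ i * (ψ i * (ψ i * ψd i)) + q⁻¹ • (ψ i * (ψ i * (ψd i * ψ i))) := by
            rw [hu, mul_add, mul_smul_comm]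
        _ = 0 := by
            have t2 : ψ i * (ψ i * (ψd i * ψ i)) = 0 := by
              have e : ψ i * (ψ i * (ψd i * ψ i)) = (ψ i * (ψ i * ψd i)) * ψ i := by
                simp only [mul_assoc]
              rw [e, hab0, zero_mul]
            rw [hab0, mul_zero, t2, smul_zero, add_zero]
    calc ψ i * ψ i = (ψ i * ψ i) * (v i * vinv i) := by rw [h.v_vinv i hi, mul_one]
      _ = ((ψ i * ψ i) * v i) * vinv i := (mul_assoc _ _ _).symm
      _ = 0 := by rw [hu2, zero_mul]
  · have hh := h.ψ_ψ i i hi hi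
    calc ψ i * ψ i = (2:K)⁻¹ • ((2:K) • (ψ i * ψ i)) := by
          rw [smul_smul, inv_mul_cancel₀ h2, one_smul]
      _ = 0 := by rw [two_smul, hh, smul_zero]

lemma ψd_sq (hq0 : q ≠ 0) (hq1 : q ^ 2 ≠ 1) (i : ℕ) (hi : i < n) :
    ψd i * ψd i = 0 := by
  by_cases h2 : (2 : K) = 0
  · have hqq := qdiff_ne (q := q) hq0 hq1
    have hq21 : q * q + 1 ≠ 0 := q21_ne hq1 h2
    have hX := h.pair_X hq0 hq1 i hi
    have hY := h.pair_Y hq0 hq1 i hi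
    have hub : v i * ψd i = q⁻¹ • (ψd i * v i) := by simpa using h.v_ψd i i hi hi
    have hwb : vinv i * ψd i = q • (ψd i * vinv i) := by
      simpa using h.vinv_ψd hq0 i i hi hi
    have assoc1 : (ψd i * ψ i) * ψd i = ψd i * (ψ i * ψd i) := mul_assoc _ _ _
    rw [hX, hY] at assoc1
    have eq1 : q • (ψd i * vinv i) - q⁻¹ • (ψd i * v i)
        = q • (ψd i * v i) - q⁻¹ • (ψd i * vinv i) := by
      have L : ((q-q⁻¹)⁻¹ • (vinv i - v i)) * ψd i
          = (q - q⁻¹)⁻¹ • (q • (ψd i * vinv i) - q⁻¹ • (ψd i * v i)) := by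
        rw [smul_mul_assoc, sub_mul, hwb, hub, smul_sub]
      have R : ψd i * ((q-q⁻¹)⁻¹ • (q • v i - q⁻¹ • vinv i))
          = (q-q⁻¹)⁻¹ • (q • (ψd i * v i) - q⁻¹ • (ψd i * vinv i)) := by
        rw [mul_smul_comm, mul_sub, mul_smul_comm, mul_smul_comm]
      rw [L, R] at assoc1
      have hc := congrArg (fun x => (q - q⁻¹) • x) assoc1
      simpa only [smul_smul, mul_inv_cancel₀ hqq, one_smul] using hc
    have hqpq : q + q⁻¹ ≠ 0 := by
      intro hc
      apply hq21
      field_simp at hc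
      linear_combination hc
    have eq3 : ψd i * vinv i = ψd i * v i := by
      have eq2 : (q + q⁻¹) • (ψd i * vinv i) = (q + q⁻¹) • (ψd i * v i) := by
        calc (q + q⁻¹) • (ψd i * vinv i)
            = (q • (ψd i * vinv i) - q⁻¹ • (ψd i * v i))
              + q⁻¹ • (ψd i * v i) + q⁻¹ • (ψd i * vinv i) := by module
          _ = (q • (ψd i * v i) - q⁻¹ • (ψd i * vinv i))
              + q⁻¹ • (ψd i * v i) + q⁻¹ • (ψd i * vinv i) := by rw [eq1]
          _ = (q + q⁻¹) • (ψd i * v i) := by module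
      have hc := congrArg (fun x => (q + q⁻¹)⁻¹ • x) eq2
      simpa only [smul_smul, inv_mul_cancel₀ hqpq, one_smul] using hc
    have hu : ψd i * v i = ψd i * (ψ i * ψd i) + q⁻¹ • (ψd i * (ψd i * ψ i)) := by
      conv_lhs => rw [← h.rel_qinv i hi]
      rw [mul_add, mul_smul_comm]
    have hw : ψd i * vinv i = ψd i * (ψ i * ψd i) + q • (ψd i * (ψd i * ψ i)) := by
      conv_lhs => rw [← h.rel_q i hi]
      rw [mul_add, mul_smul_comm]
    have hba0 : ψd i * (ψd i * ψ i) = 0 := by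
      have eq4 : (q - q⁻¹) • (ψd i * (ψd i * ψ i)) = 0 := by
        have e : (q - q⁻¹) • (ψd i * (ψd i * ψ i))
            = (ψd i * (ψ i * ψd i) + q • (ψd i * (ψd i * ψ i)))
              - (ψd i * (ψ i * ψd i) + q⁻¹ • (ψd i * (ψd i * ψ i))) := by module
        rw [e, ← hu, ← hw, eq3, sub_self]
      have hc := congrArg (fun x => (q - q⁻¹)⁻¹ • x) eq4
      simpa only [smul_smul, inv_mul_cancel₀ hqq, one_smul, smul_zero] using hc
    have hu2 : (ψd i * ψd i) * v i = 0 := by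
      calc (ψd i * ψd i) * v i = ψd i * (ψd i * v i) := mul_assoc _ _ _
        _ = ψd i * (ψd i * (ψ i * ψd i)) + q⁻¹ • (ψd i * (ψd i * (ψd i * ψ i))) := by
            rw [hu, mul_add, mul_smul_comm]
        _ = 0 := by
            have t1 : ψd i * (ψd i * (ψ i * ψd i)) = 0 := by
              have e : ψd i * (ψd i * (ψ i * ψd i)) = (ψd i * (ψd i * ψ i)) * ψd i := by
                simp only [mul_assoc]
              rw [e, hba0, zero_mul]
            rw [t1, hba0, mul_zero, smul_zero, add_zero]
    calc ψd i * ψd i = (ψd i * ψd i) * (v i * vinv i) := by rw [h.v_vinv i hi, mul_one]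
      _ = ((ψd i * ψd i) * v i) * vinv i := (mul_assoc _ _ _).symm
      _ = 0 := by rw [hu2, zero_mul]
  · have hh := h.ψd_ψd i i hi hi
    calc ψd i * ψd i = (2:K)⁻¹ • ((2:K) • (ψd i * ψd i)) := by
          rw [smul_smul, inv_mul_cancel₀ h2, one_smul]
      _ = 0 := by rw [two_smul, hh, smul_zero]

end CliffordRel


/-- The `d_i`-rescaled Cartan integers of `osp(1|2n)` with respect to `Θ₁` (0-indexed rows
and columns `0,…,n-1`, the last row/column corresponding to the odd simple root):
`d_i a_{ij}` where `d = (1,…,1,1/2)`, `a_{ii} = 2`, `a_{i,i±1} = -1` for `i < n`,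
`a_{n,n-1} = -2`, `a_{nn} = 2`. -/
def ospExp (n : ℕ) (i j : ℕ) : ℤ :=
  if i = j then (if i + 1 = n then 1 else 2)
  else if i + 1 = j ∨ j + 1 = i then -1 else 0

set_option maxHeartbeats 2000000 in
/-- the assignments `e_i ↦ ψ_i ψ_{i+1}†`, `f_i ↦ ψ_{i+1} ψ_i†`,
`k_i ↦ v_i v_{i+1}⁻¹` (for `i < n`), `e_n ↦ √-1 (q^{1/2} - q^{-1/2})⁻¹ ψ_n`,
`f_n ↦ ψ_n†`, `k_n ↦ √-1 q^{1/2} v_n` define a superalgebra homomorphism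
`π : U_q(osp(1|2n), Θ₁) → Cl_q(n)`: the images satisfy all defining relations of
`U_q(osp(1|2n), Θ₁)`. Here `s = q^{1/2}` and `I = √-1` in `K`. -/
theorem stmt9 {K A : Type*} [Field K] [Ring A] [Algebra K A]
    (q s I : K) (hq0 : q ≠ 0) (hq1 : q ^ 2 ≠ 1) (hs : s ^ 2 = q) (hs0 : s ≠ 0)
    (hI : I ^ 2 = -1)
    (n : ℕ) (hn : 1 ≤ n) (ψ ψd v vinv : ℕ → A)
    (h : CliffordRel K A q n ψ ψd v vinv)
    (E F Kk Kinv : ℕ → A)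
    (hE : ∀ i, i < n → E i = if i + 1 < n then ψ i * ψd (i+1)
                             else (I * (s - s⁻¹)⁻¹) • ψ i)
    (hF : ∀ i, i < n → F i = if i + 1 < n then ψ (i+1) * ψd i else ψd i)
    (hK : ∀ i, i < n → Kk i = if i + 1 < n then v i * vinv (i+1) else (I * s) • v i)
    (hKinv : ∀ i, i < n → Kinv i = if i + 1 < n then vinv i * v (i+1)
                                   else (-(I) * s⁻¹) • vinv i) :
    -- relations (R1): the `k_i` are invertible and commute
    (∀ i, i < n → Kk i * Kinv i = 1 ∧ Kinv i * Kk i = 1) ∧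
    (∀ i j, i < n → j < n → Kk i * Kk j = Kk j * Kk i) ∧
    -- `k_i e_j k_i⁻¹ = q_i^{a_ij} e_j`, `k_i f_j k_i⁻¹ = q_i^{-a_ij} f_j`
    (∀ i j, i < n → j < n → Kk i * E j = (q ^ ospExp n i j) • (E j * Kk i)) ∧
    (∀ i j, i < n → j < n → Kk i * F j = (q ^ (-ospExp n i j)) • (F j * Kk i)) ∧
    -- `e_i f_j - (-1)^{[e_i][f_j]} f_j e_i = δ_ij (k_i - k_i⁻¹)/(q - q⁻¹)`
    (∀ i j, i < n → j < n →
      E i * F j - (if i + 1 = n ∧ j + 1 = n then (-1 : K) else 1) • (F j * E i) =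
        if i = j then (q - q⁻¹)⁻¹ • (Kk i - Kinv i) else 0) ∧
    -- quantum Serre relations: commuting non-adjacent generators
    (∀ i j, i < n → j < n → i + 2 ≤ j ∨ j + 2 ≤ i →
      E i * E j = E j * E i ∧ F i * F j = F j * F i) ∧
    -- quantum Serre relations for adjacent generators, squared index not the odd one
    (∀ i j, i < n → j < n → (i + 1 = j ∨ j + 1 = i) → i + 1 < n →
      E i ^ 2 * E j - (q + q⁻¹) • (E i * E j * E i) + E j * E i ^ 2 = 0 ∧
      F i ^ 2 * F j - (q + q⁻¹) • (F i * F j * F i) + F j * F i ^ 2 = 0) ∧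
    -- higher order quantum Serre relations for the odd generator
    (2 ≤ n →
      E (n-1) ^ 3 * E (n-2)
        + (1 - q - q⁻¹) • (E (n-1) ^ 2 * E (n-2) * E (n-1)
            + E (n-1) * E (n-2) * E (n-1) ^ 2)
        + E (n-2) * E (n-1) ^ 3 = 0 ∧
      F (n-1) ^ 3 * F (n-2)
        + (1 - q - q⁻¹) • (F (n-1) ^ 2 * F (n-2) * F (n-1)
            + F (n-1) * F (n-2) * F (n-1) ^ 2)
        + F (n-2) * F (n-1) ^ 3 = 0) := by
  have hqq : q - q⁻¹ ≠ 0 := CliffordRel.qdiff_ne hq0 hq1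
  have hs2 : s * s = q := by rw [← pow_two]; exact hs
  have hss : s - s⁻¹ ≠ 0 := by
    intro hc
    apply hq1
    field_simp at hc
    rw [pow_two, ← hs2]
    linear_combination (s*s + 1) * hc
  have hsc : (I * s) * (-I * s⁻¹) = 1 := by
    have e : (I * s) * (-I * s⁻¹) = -(I^2) * (s * s⁻¹) := by ring
    rw [e, hI, mul_inv_cancel₀ hs0]; ring
  have hsc2 : (-I * s⁻¹) * (I * s) = 1 := by rw [← hsc]; ring
  have hψsq : ∀ a, a < n → ψ a * ψ a = 0 := fun a ha => h.ψ_sq hq0 hq1 a ha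
  have hψdsq : ∀ a, a < n → ψd a * ψd a = 0 := fun a ha => h.ψd_sq hq0 hq1 a ha
  have sqx : ∀ a, a < n → ∀ x : A, ψ a * (ψ a * x) = 0 :=
    fun a ha => sq_ext (hψsq a ha)
  have sqdx : ∀ a, a < n → ∀ x : A, ψd a * (ψd a * x) = 0 :=
    fun a ha => sq_ext (hψdsq a ha)
  have acψψ : ∀ a b, a < n → b < n → ψ a * ψ b = -(ψ b * ψ a) :=
    fun a b ha hb => ac_base (h.ψ_ψ a b ha hb)
  have acψdψd : ∀ a b, a < n → b < n → ψd a * ψd b = -(ψd b * ψd a) :=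
    fun a b ha hb => ac_base (h.ψd_ψd a b ha hb)
  have acψψd : ∀ a b, a < n → b < n → a ≠ b → ψ a * ψd b = -(ψd b * ψ a) :=
    fun a b ha hb hab => ac_base (h.ψ_ψd a b ha hb hab)
  have acψdψ : ∀ a b, a < n → b < n → a ≠ b → ψd a * ψ b = -(ψ b * ψd a) :=
    fun a b ha hb hab =>
      ac_base (by rw [add_comm]; exact h.ψ_ψd b a hb ha (Ne.symm hab))
  have axψψ : ∀ a b, a < n → b < n → ∀ x, ψ a * (ψ b * x) = -(ψ b * (ψ a * x)) :=
    fun a b ha hb x => ac_ext (h.ψ_ψ a b ha hb)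
  have axψdψd : ∀ a b, a < n → b < n → ∀ x, ψd a * (ψd b * x) = -(ψd b * (ψd a * x)) :=
    fun a b ha hb x => ac_ext (h.ψd_ψd a b ha hb)
  have axψψd : ∀ a b, a < n → b < n → a ≠ b → ∀ x,
      ψ a * (ψd b * x) = -(ψd b * (ψ a * x)) :=
    fun a b ha hb hab x => ac_ext (h.ψ_ψd a b ha hb hab)
  have axψdψ : ∀ a b, a < n → b < n → a ≠ b → ∀ x,
      ψd a * (ψ b * x) = -(ψ b * (ψd a * x)) :=
    fun a b ha hb hab x =>
      ac_ext (by rw [add_comm]; exact h.ψ_ψd b a hb ha (Ne.symm hab))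
  refine ⟨?_, ?_, ?_, ?_, ?_, ?_, ?_, ?_⟩
  -- ### Conjunct 1: invertibility of Kk
  · intro i hi
    rw [hK i hi, hKinv i hi]
    by_cases hi1 : i + 1 < n
    · rw [if_pos hi1, if_pos hi1]
      constructor
      · calc v i * vinv (i+1) * (vinv i * v (i+1))
            = v i * (vinv i * (vinv (i+1) * v (i+1))) := by
              rw [mul_assoc, ← mul_assoc (vinv (i+1)),
                h.vinv_vinv_comm (i+1) i hi1 hi, mul_assoc]
          _ = 1 := by rw [h.vinv_v (i+1) hi1, mul_one, h.v_vinv i hi]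
      · calc vinv i * v (i+1) * (v i * vinv (i+1))
            = vinv i * (v i * (v (i+1) * vinv (i+1))) := by
              rw [mul_assoc, ← mul_assoc (v (i+1)),
                h.v_comm (i+1) i hi1 hi, mul_assoc]
          _ = 1 := by rw [h.v_vinv (i+1) hi1, mul_one, h.vinv_v i hi]
    · rw [if_neg hi1, if_neg hi1]
      constructor
      · calc (I*s) • v i * ((-I*s⁻¹) • vinv i)
            = ((I*s) * (-I*s⁻¹)) • (v i * vinv i) := by
              rw [smul_mul_assoc, mul_smul_comm, smul_smul]
          _ = 1 := by rw [h.v_vinv i hi, hsc, one_smul]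
      · calc (-I*s⁻¹) • vinv i * ((I*s) • v i)
            = ((-I*s⁻¹) * (I*s)) • (vinv i * v i) := by
              rw [smul_mul_assoc, mul_smul_comm, smul_smul]
          _ = 1 := by rw [h.vinv_v i hi, hsc2, one_smul]
  -- ### Conjunct 2: Kk commute
  · intro i j hi hj
    rw [hK i hi, hK j hj]
    have cVV : ∀ a b, a < n → b < n → Commute (v a) (v b) :=
      fun a b ha hb => h.v_comm a b ha hb
    have cVW : ∀ a b, a < n → b < n → Commute (v a) (vinv b) :=
      fun a b ha hb => h.v_vinv_comm a b ha hb
    have cWV : ∀ a b, a < n → b < n → Commute (vinv a) (v b) :=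
      fun a b ha hb => (cVW b a hb ha).symm
    have cWW : ∀ a b, a < n → b < n → Commute (vinv a) (vinv b) :=
      fun a b ha hb => h.vinv_vinv_comm a b ha hb
    by_cases hi1 : i + 1 < n <;> by_cases hj1 : j + 1 < n
    · rw [if_pos hi1, if_pos hj1]
      exact (Commute.mul_left
        ((cVV i j hi hj).mul_right (cVW i (j+1) hi hj1))
        ((cWV (i+1) j hi1 hj).mul_right (cWW (i+1) (j+1) hi1 hj1))).eq
    · rw [if_pos hi1, if_neg hj1]
      exact (Commute.smul_right
        (Commute.mul_left (cVV i j hi hj) (cWV (i+1) j hi1 hj)) _).eq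
    · rw [if_neg hi1, if_pos hj1]
      exact (Commute.smul_left
        ((cVV i j hi hj).mul_right (cVW i (j+1) hi hj1)) _).eq
    · rw [if_neg hi1, if_neg hj1]
      exact (Commute.smul_left (Commute.smul_right (cVV i j hi hj) _) _).eq
  -- ### Conjunct 3: K-E commutation
  · intro i j hi hj
    rw [hK i hi, hE j hj]
    by_cases hi1 : i + 1 < n <;> by_cases hj1 : j + 1 < n
    · rw [if_pos hi1, if_pos hj1]
      have e1 : v i * (ψ j * ψd (j+1))
          = ((if i = j then q else 1) * (if i = j+1 then q⁻¹ else 1))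
            • ((ψ j * ψd (j+1)) * v i) :=
        smul_pass (h.v_ψ i j hi hj) (h.v_ψd i (j+1) hi hj1)
      have e2 : vinv (i+1) * (ψ j * ψd (j+1))
          = ((if i+1 = j then q⁻¹ else 1) * (if i+1 = j+1 then q else 1))
            • ((ψ j * ψd (j+1)) * vinv (i+1)) :=
        smul_pass (h.vinv_ψ hq0 (i+1) j hi1 hj) (h.vinv_ψd hq0 (i+1) (j+1) hi1 hj1)
      rw [smul_pass2 e1 e2]
      congr 1
      unfold ospExp
      split_ifs <;> first
        | omega
        | (simp only [zpow_neg, zpow_ofNat, zpow_one, zpow_zero]; try ring)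
    · rw [if_pos hi1, if_neg hj1]
      have e1 : v i * ψ j = (if i = j then q else 1) • (ψ j * v i) :=
        h.v_ψ i j hi hj
      have e2 : vinv (i+1) * ψ j = (if i+1 = j then q⁻¹ else 1) • (ψ j * vinv (i+1)) :=
        h.vinv_ψ hq0 (i+1) j hi1 hj
      simp only [smul_mul_assoc, mul_smul_comm, smul_smul]
      rw [smul_pass2 e1 e2, smul_smul]
      congr 1
      unfold ospExp
      split_ifs <;> first
        | omega
        | (simp only [zpow_neg, zpow_ofNat, zpow_one, zpow_zero]; try ring)
    · rw [if_neg hi1, if_pos hj1]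
      have e3 : v i * (ψ j * ψd (j+1))
          = ((if i = j then q else 1) * (if i = j+1 then q⁻¹ else 1))
            • ((ψ j * ψd (j+1)) * v i) :=
        smul_pass (h.v_ψ i j hi hj) (h.v_ψd i (j+1) hi hj1)
      simp only [smul_mul_assoc, mul_smul_comm, smul_smul]
      rw [e3, smul_smul]
      congr 1
      unfold ospExp
      split_ifs <;> first
        | omega
        | (simp only [zpow_neg, zpow_ofNat, zpow_one, zpow_zero]; try ring)
    · rw [if_neg hi1, if_neg hj1]
      have hij : i = j := by omega
      subst hij
      simp only [smul_mul_assoc, mul_smul_comm, smul_smul]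
      rw [h.v_ψ i i hi hi, if_pos rfl, smul_smul]
      congr 1
      unfold ospExp
      split_ifs <;> first
        | omega
        | (simp only [zpow_neg, zpow_ofNat, zpow_one, zpow_zero]; try ring)
  -- ### Conjunct 4: K-F commutation
  · intro i j hi hj
    rw [hK i hi, hF j hj]
    by_cases hi1 : i + 1 < n <;> by_cases hj1 : j + 1 < n
    · rw [if_pos hi1, if_pos hj1]
      have e1 : v i * (ψ (j+1) * ψd j)
          = ((if i = j+1 then q else 1) * (if i = j then q⁻¹ else 1))
            • ((ψ (j+1) * ψd j) * v i) :=
        smul_pass (h.v_ψ i (j+1) hi hj1) (h.v_ψd i j hi hj)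
      have e2 : vinv (i+1) * (ψ (j+1) * ψd j)
          = ((if i+1 = j+1 then q⁻¹ else 1) * (if i+1 = j then q else 1))
            • ((ψ (j+1) * ψd j) * vinv (i+1)) :=
        smul_pass (h.vinv_ψ hq0 (i+1) (j+1) hi1 hj1) (h.vinv_ψd hq0 (i+1) j hi1 hj)
      rw [smul_pass2 e1 e2]
      congr 1
      unfold ospExp
      split_ifs <;> first
        | omega
        | (simp only [zpow_neg, zpow_ofNat, zpow_one, zpow_zero, neg_neg]; try ring)
    · rw [if_pos hi1, if_neg hj1]
      have e1 : v i * ψd j = (if i = j then q⁻¹ else 1) • (ψd j * v i) :=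
        h.v_ψd i j hi hj
      have e2 : vinv (i+1) * ψd j = (if i+1 = j then q else 1) • (ψd j * vinv (i+1)) :=
        h.vinv_ψd hq0 (i+1) j hi1 hj
      rw [smul_pass2 e1 e2]
      congr 1
      unfold ospExp
      split_ifs <;> first
        | omega
        | (simp only [zpow_neg, zpow_ofNat, zpow_one, zpow_zero, neg_neg]; try ring)
    · rw [if_neg hi1, if_pos hj1]
      have e3 : v i * (ψ (j+1) * ψd j)
          = ((if i = j+1 then q else 1) * (if i = j then q⁻¹ else 1))
            • ((ψ (j+1) * ψd j) * v i) :=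
        smul_pass (h.v_ψ i (j+1) hi hj1) (h.v_ψd i j hi hj)
      simp only [smul_mul_assoc, mul_smul_comm, smul_smul]
      rw [e3, smul_smul]
      congr 1
      unfold ospExp
      split_ifs <;> first
        | omega
        | (simp only [zpow_neg, zpow_ofNat, zpow_one, zpow_zero, neg_neg]; try ring)
    · rw [if_neg hi1, if_neg hj1]
      have hij : i = j := by omega
      subst hij
      simp only [smul_mul_assoc, mul_smul_comm, smul_smul]
      rw [h.v_ψd i i hi hi, if_pos rfl, smul_smul]
      congr 1
      unfold ospExp
      split_ifs <;> first
        | omega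
        | (simp only [zpow_neg, zpow_ofNat, zpow_one, zpow_zero, neg_neg]; try ring)
  -- ### Conjunct 5: E-F relation
  · intro i j hi hj
    rcases eq_or_ne i j with rfl | hij
    · -- diagonal case
      rw [if_pos rfl]
      by_cases hi1 : i + 1 < n
      · -- even diagonal
        rw [if_neg (by omega : ¬(i + 1 = n ∧ i + 1 = n)), one_smul,
          hE i hi, hF i hi, hK i hi, hKinv i hi, if_pos hi1, if_pos hi1,
          if_pos hi1, if_pos hi1]
        have hXi := h.pair_X hq0 hq1 i hi
        have hX1 := h.pair_X hq0 hq1 (i+1) hi1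
        have hYi := h.pair_Y hq0 hq1 i hi
        have hY1 := h.pair_Y hq0 hq1 (i+1) hi1
        have c1 : vinv (i+1) * ψd i = ψd i * vinv (i+1) := by
          have := h.vinv_ψd hq0 (i+1) i hi1 hi
          rwa [if_neg (by omega), one_smul] at this
        have c2 : v (i+1) * ψd i = ψd i * v (i+1) := by
          have := h.v_ψd (i+1) i hi1 hi
          rwa [if_neg (by omega), one_smul] at this
        have c3 : vinv i * ψd (i+1) = ψd (i+1) * vinv i := by
          have := h.vinv_ψd hq0 i (i+1) hi hi1
          rwa [if_neg (by omega), one_smul] at this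
        have c4 : v i * ψd (i+1) = ψd (i+1) * v i := by
          have := h.v_ψd i (i+1) hi hi1
          rwa [if_neg (by omega), one_smul] at this
        have eEF : (ψ i * ψd (i+1)) * (ψ (i+1) * ψd i)
            = ((q-q⁻¹)⁻¹ * (q-q⁻¹)⁻¹) • (q • (v i * vinv (i+1))
                - q⁻¹ • (vinv i * vinv (i+1))
                - q • (v i * v (i+1)) + q⁻¹ • (vinv i * v (i+1))) := by
          calc (ψ i * ψd (i+1)) * (ψ (i+1) * ψd i)
              = ψ i * ((ψd (i+1) * ψ (i+1)) * ψd i) := by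
                rw [mul_assoc, ← mul_assoc (ψd (i+1))]
            _ = (q-q⁻¹)⁻¹ • (ψ i * ((vinv (i+1) - v (i+1)) * ψd i)) := by
                rw [hX1, smul_mul_assoc, mul_smul_comm]
            _ = (q-q⁻¹)⁻¹ • (ψ i * (ψd i * vinv (i+1) - ψd i * v (i+1))) := by
                rw [sub_mul, c1, c2]
            _ = (q-q⁻¹)⁻¹ • ((ψ i * ψd i) * vinv (i+1) - (ψ i * ψd i) * v (i+1)) := by
                rw [mul_sub, ← mul_assoc, ← mul_assoc]
            _ = ((q-q⁻¹)⁻¹ * (q-q⁻¹)⁻¹) • (q • (v i * vinv (i+1))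
                - q⁻¹ • (vinv i * vinv (i+1))
                - q • (v i * v (i+1)) + q⁻¹ • (vinv i * v (i+1))) := by
                rw [hYi]
                simp only [smul_mul_assoc, sub_mul, smul_sub, smul_smul]
                match_scalars <;> ring
        have eFE : (ψ (i+1) * ψd i) * (ψ i * ψd (i+1))
            = ((q-q⁻¹)⁻¹ * (q-q⁻¹)⁻¹) • (q • (vinv i * v (i+1))
                - q⁻¹ • (vinv i * vinv (i+1))
                - q • (v i * v (i+1)) + q⁻¹ • (v i * vinv (i+1))) := by
          calc (ψ (i+1) * ψd i) * (ψ i * ψd (i+1))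
              = ψ (i+1) * ((ψd i * ψ i) * ψd (i+1)) := by
                rw [mul_assoc, ← mul_assoc (ψd i)]
            _ = (q-q⁻¹)⁻¹ • (ψ (i+1) * ((vinv i - v i) * ψd (i+1))) := by
                rw [hXi, smul_mul_assoc, mul_smul_comm]
            _ = (q-q⁻¹)⁻¹ • (ψ (i+1) * (ψd (i+1) * vinv i - ψd (i+1) * v i)) := by
                rw [sub_mul, c3, c4]
            _ = (q-q⁻¹)⁻¹ • ((ψ (i+1) * ψd (i+1)) * vinv i
                - (ψ (i+1) * ψd (i+1)) * v i) := by
                rw [mul_sub, ← mul_assoc, ← mul_assoc]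
            _ = ((q-q⁻¹)⁻¹ * (q-q⁻¹)⁻¹) • (q • (vinv i * v (i+1))
                - q⁻¹ • (vinv i * vinv (i+1))
                - q • (v i * v (i+1)) + q⁻¹ • (v i * vinv (i+1))) := by
                rw [hY1]
                simp only [smul_mul_assoc, sub_mul, smul_sub, smul_smul]
                rw [h.v_vinv_comm (i+1) i hi1 hi, h.v_comm (i+1) i hi1 hi,
                  h.vinv_vinv_comm (i+1) i hi1 hi,
                  (h.v_vinv_comm i (i+1) hi hi1).symm]
                match_scalars <;> ring
        rw [eEF, eFE, ← smul_sub]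
        have hone : (q-q⁻¹)⁻¹ * (q-q⁻¹)⁻¹ * (q - q⁻¹) = (q-q⁻¹)⁻¹ := by
          rw [mul_assoc, inv_mul_cancel₀ hqq, mul_one]
        have step : (q • (v i * vinv (i+1)) - q⁻¹ • (vinv i * vinv (i+1))
              - q • (v i * v (i+1)) + q⁻¹ • (vinv i * v (i+1)))
            - (q • (vinv i * v (i+1)) - q⁻¹ • (vinv i * vinv (i+1))
              - q • (v i * v (i+1)) + q⁻¹ • (v i * vinv (i+1)))
            = (q - q⁻¹) • (v i * vinv (i+1) - vinv i * v (i+1)) := by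
          match_scalars <;> ring
        rw [step, smul_smul, hone]
      · -- odd diagonal
        rw [if_pos ⟨by omega, by omega⟩,
          hE i hi, hF i hi, hK i hi, hKinv i hi, if_neg hi1, if_neg hi1,
          if_neg hi1, if_neg hi1, neg_smul, one_smul, sub_neg_eq_add]
        have hXi := h.pair_X hq0 hq1 i hi
        have hYi := h.pair_Y hq0 hq1 i hi
        have goal' : (I*(s-s⁻¹)⁻¹) • ((q • v i - q⁻¹ • vinv i) + (vinv i - v i))
            = (I*s) • v i - (-I*s⁻¹) • vinv i := by
          have hss1 : s*s - 1 ≠ 0 := by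
            intro hc
            apply hq1
            have e : q = 1 := by rw [← hs2]; linear_combination hc
            rw [e, one_pow]
          have hss2 : (s*s - 1)*q ≠ 0 := mul_ne_zero hss1 hq0
          match_scalars
          · field_simp
            rw [← hs, div_eq_iff (by rw [pow_two]; exact hss1)]; ring
          · field_simp
            rw [← hs, div_eq_iff (by rw [pow_two]; exact hss1)]; ring
        calc (I*(s-s⁻¹)⁻¹) • ψ i * ψd i + ψd i * ((I*(s-s⁻¹)⁻¹) • ψ i)
            = (I*(s-s⁻¹)⁻¹) • (ψ i * ψd i) + (I*(s-s⁻¹)⁻¹) • (ψd i * ψ i) := by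
              rw [smul_mul_assoc, mul_smul_comm]
          _ = (I*(s-s⁻¹)⁻¹) • ((q - q⁻¹)⁻¹ • (q • v i - q⁻¹ • vinv i))
              + (I*(s-s⁻¹)⁻¹) • ((q - q⁻¹)⁻¹ • (vinv i - v i)) := by
              rw [hYi, hXi]
          _ = (q - q⁻¹)⁻¹ • ((I*(s-s⁻¹)⁻¹) • ((q • v i - q⁻¹ • vinv i) + (vinv i - v i))) := by
              module
          _ = (q - q⁻¹)⁻¹ • ((I*s) • v i - (-I*s⁻¹) • vinv i) := by rw [goal']
    · -- off-diagonal
      rw [if_neg hij, if_neg (by omega : ¬(i + 1 = n ∧ j + 1 = n)), one_smul,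
        sub_eq_zero, hE i hi, hF j hj]
      by_cases hi1 : i + 1 < n <;> by_cases hj1 : j + 1 < n
      · rw [if_pos hi1, if_pos hj1]
        by_cases hji : j + 1 = i
        · subst hji
          have l : (ψ (j+1) * ψd (j+1+1)) * (ψ (j+1) * ψd j) = 0 := by
            simp only [mul_assoc, neg_mul, mul_neg, neg_neg,
              axψdψ (j+1+1) (j+1) hi1 hi (by omega),
              sqx (j+1) hi, mul_zero, neg_zero]
          have r : (ψ (j+1) * ψd j) * (ψ (j+1) * ψd (j+1+1)) = 0 := by
            simp only [mul_assoc, neg_mul, mul_neg, neg_neg,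
              axψdψ j (j+1) hj hi (by omega),
              sqx (j+1) hi, mul_zero, neg_zero]
          rw [l, r]
        · by_cases hij2 : i + 1 = j
          · subst hij2
            have l : (ψ i * ψd (i+1)) * (ψ (i+1+1) * ψd (i+1)) = 0 := by
              simp only [mul_assoc, neg_mul, mul_neg, neg_neg,
                acψψd (i+1+1) (i+1) hj1 hi1 (by omega),
                sqdx (i+1) hi1, mul_zero, neg_zero]
            have r : (ψ (i+1+1) * ψd (i+1)) * (ψ i * ψd (i+1)) = 0 := by
              simp only [mul_assoc, neg_mul, mul_neg, neg_neg,
                acψψd i (i+1) hi hi1 (by omega),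
                sqdx (i+1) hi1, mul_zero, neg_zero]
            rw [l, r]
          · exact comm_of_ac4 (acψψ i (j+1) hi hj1)
              (acψdψ (i+1) (j+1) hi1 hj1 (by omega))
              (acψψd i j hi hj hij) (acψdψd (i+1) j hi1 hj)
      · rw [if_pos hi1, if_neg hj1]
        by_cases hij2 : i + 1 = j
        · subst hij2
          have l : (ψ i * ψd (i+1)) * ψd (i+1) = 0 := by
            rw [mul_assoc, hψdsq (i+1) hi1, mul_zero]
          have r : ψd (i+1) * (ψ i * ψd (i+1)) = 0 := by
            simp only [mul_assoc, neg_mul, mul_neg, neg_neg,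
              acψψd i (i+1) hi hi1 (by omega),
              sqdx (i+1) hi1, mul_zero, neg_zero]
          rw [l, r]
        · exact comm_of_ac (acψψd i j hi hj hij) (acψdψd (i+1) j hi1 hj)
      · rw [if_neg hi1, if_pos hj1]
        by_cases hji : j + 1 = i
        · subst hji
          have l : ψ (j+1) * (ψ (j+1) * ψd j) = 0 := sqx (j+1) hi _
          have r : (ψ (j+1) * ψd j) * ψ (j+1) = 0 := by
            simp only [mul_assoc, neg_mul, mul_neg, neg_neg,
              acψdψ j (j+1) hj hi (by omega),
              sqx (j+1) hi, mul_zero, neg_zero]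
          rw [smul_mul_assoc, mul_smul_comm, l, r, smul_zero]
        · rw [smul_mul_assoc, mul_smul_comm,
            (comm_of_ac (acψψ (j+1) i hj1 hi) (acψdψ j i hj hi (Ne.symm hij))).symm]
      · omega
  -- ### Conjunct 6: distant Serre
  · intro i j hi hj hdist
    have key : ∀ a b, a < n → b < n → a + 2 ≤ b →
        E a * E b = E b * E a ∧ F a * F b = F b * F a := by
      intro a b ha hb hab
      have ha1 : a + 1 < n := by omega
      rw [hE a ha, hE b hb, hF a ha, hF b hb, if_pos ha1, if_pos ha1]
      by_cases hb1 : b + 1 < n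
      · rw [if_pos hb1, if_pos hb1]
        constructor
        · exact comm_of_ac4 (acψψ a b ha hb) (acψdψ (a+1) b ha1 hb (by omega))
            (acψψd a (b+1) ha hb1 (by omega)) (acψdψd (a+1) (b+1) ha1 hb1)
        · exact comm_of_ac4 (acψψ (a+1) (b+1) ha1 hb1) (acψdψ a (b+1) ha hb1 (by omega))
            (acψψd (a+1) b ha1 hb (by omega)) (acψdψd a b ha hb)
      · rw [if_neg hb1, if_neg hb1]
        constructor
        · rw [mul_smul_comm, smul_mul_assoc,
            comm_of_ac (acψψ a b ha hb) (acψdψ (a+1) b ha1 hb (by omega))]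
        · exact comm_of_ac (acψψd (a+1) b ha1 hb (by omega)) (acψdψd a b ha hb)
    rcases hdist with hd | hd
    · exact key i j hi hj hd
    · obtain ⟨k1, k2⟩ := key j i hj hi hd
      exact ⟨k1.symm, k2.symm⟩
  -- ### Conjunct 7: adjacent Serre
  · intro i j hi hj hadj hi1
    have hE2 : E i ^ 2 = 0 := by
      rw [pow_two, hE i hi, if_pos hi1]
      simp only [mul_assoc]
      rw [axψdψ (i+1) i hi1 hi (by omega), mul_neg, sqx i hi, neg_zero]
    have hF2 : F i ^ 2 = 0 := by
      rw [pow_two, hF i hi, if_pos hi1]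
      simp only [mul_assoc]
      rw [axψdψ i (i+1) hi hi1 (by omega), mul_neg, sqx (i+1) hi1, neg_zero]
    have hmidE : E i * E j * E i = 0 := by
      rw [hE i hi, hE j hj, if_pos hi1]
      rcases hadj with hadj | hadj
      · -- j = i + 1
        subst hadj
        by_cases hj1 : i + 1 + 1 < n
        · rw [if_pos hj1]
          simp only [mul_assoc, neg_mul, mul_neg, neg_neg,
            axψdψ (i+1+1) i hj1 hi (by omega),
            axψψ (i+1) i hi1 hi, axψdψ (i+1) i hi1 hi (by omega),
            sqx i hi, mul_zero, neg_zero]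
        · rw [if_neg hj1]
          simp only [mul_assoc, smul_mul_assoc, mul_smul_comm, neg_mul, mul_neg,
            neg_neg, axψψ (i+1) i hi1 hi, axψdψ (i+1) i hi1 hi (by omega),
            sqx i hi, mul_zero, neg_zero, smul_zero]
      · -- j + 1 = i : pivot ψd (j+2)
        subst hadj
        have hj2 : j + 1 + 1 < n := hi1
        have hj1 : j + 1 < n := hi
        rw [if_pos hj1]
        simp only [mul_assoc, neg_mul, mul_neg, neg_neg,
          acψψd (j+1) (j+1+1) hj1 hj2 (by omega),
          axψψd j (j+1+1) hj hj2 (by omega),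
          axψdψd (j+1) (j+1+1) hj1 hj2,
          axψψd (j+1) (j+1+1) hj1 hj2 (by omega),
          sqdx (j+1+1) hj2, mul_zero, neg_zero]
    have hmidF : F i * F j * F i = 0 := by
      rw [hF i hi, hF j hj, if_pos hi1]
      rcases hadj with hadj | hadj
      · -- j = i + 1 ; pivot ψd i
        subst hadj
        by_cases hj1 : i + 1 + 1 < n
        · rw [if_pos hj1]
          simp only [mul_assoc, neg_mul, mul_neg, neg_neg,
            acψψd (i+1) i hi1 hi (by omega),
            axψψd (i+1+1) i hj1 hi (by omega),
            axψdψd (i+1) i hi1 hi,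
            axψψd (i+1) i hi1 hi (by omega),
            sqdx i hi, mul_zero, neg_zero]
        · rw [if_neg hj1]
          simp only [mul_assoc, neg_mul, mul_neg, neg_neg,
            acψψd (i+1) i hi1 hi (by omega),
            axψdψd (i+1) i hi1 hi,
            axψψd (i+1) i hi1 hi (by omega),
            sqdx i hi, mul_zero, neg_zero]
      · -- j + 1 = i ; pivot ψ (j+2)
        subst hadj
        have hj2 : j + 1 + 1 < n := hi1
        have hj1 : j + 1 < n := hi
        rw [if_pos hj1]
        simp only [mul_assoc, neg_mul, mul_neg, neg_neg,
          axψdψ j (j+1+1) hj hj2 (by omega),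
          axψψ (j+1) (j+1+1) hj1 hj2,
          axψdψ (j+1) (j+1+1) hj1 hj2 (by omega),
          sqx (j+1+1) hj2, mul_zero, neg_zero]
    refine ⟨?_, ?_⟩
    · rw [hE2, hmidE]
      simp only [zero_mul, mul_zero, smul_zero, add_zero, zero_add, sub_zero,
        zero_sub, neg_zero]
    · rw [hF2, hmidF]
      simp only [zero_mul, mul_zero, smul_zero, add_zero, zero_add, sub_zero,
        zero_sub, neg_zero]
  -- ### Conjunct 8: higher Serre
  · intro h2n
    have hn1 : n - 1 < n := by omega
    have hn2 : n - 2 < n := by omega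
    have hEn : E (n-1) = (I * (s - s⁻¹)⁻¹) • ψ (n-1) := by
      rw [hE (n-1) hn1, if_neg (by omega)]
    have hFn : F (n-1) = ψd (n-1) := by
      rw [hF (n-1) hn1, if_neg (by omega)]
    have hE2 : E (n-1) ^ 2 = 0 := by
      rw [pow_two, hEn, smul_mul_assoc, mul_smul_comm,
        h.ψ_sq hq0 hq1 (n-1) hn1, smul_zero, smul_zero]
    have hE3 : E (n-1) ^ 3 = 0 := by
      rw [pow_succ, hE2, zero_mul]
    have hF2 : F (n-1) ^ 2 = 0 := by
      rw [pow_two, hFn, h.ψd_sq hq0 hq1 (n-1) hn1]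
    have hF3 : F (n-1) ^ 3 = 0 := by
      rw [pow_succ, hF2, zero_mul]
    constructor
    · rw [hE2, hE3]
      simp only [zero_mul, mul_zero, add_zero, zero_add, smul_zero]
    · rw [hF2, hF3]
      simp only [zero_mul, mul_zero, add_zero, zero_add, smul_zero]
end

section
/- Under the homomorphism π: U_q(osp(1|2n), Θ₁) → Cl_q(n), the images E_i = π(e_i), F_i = π(f_i), K_i = π(k_i) satisfy E_i F_j - (-1)^{[e_i][f_j]} F_j E_i = δ_{ij}(K_i - K_i^{-1})/(q - q^{-1}) for all 1 ≤ i, j ≤ n. In particular, for i = j = n: π(e_n) π(f_n) + π(f_n) π(e_n) = (K_n - K_n^{-1})/(q - q^{-1}). -/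
section Aux
variable {A : Type*} [Ring A]

lemma aux_pair_pair {x y z w : A} (hxz : x*z = -(z*x)) (hxw : x*w = -(w*x))
    (hyz : y*z = -(z*y)) (hyw : y*w = -(w*y)) : (x*y)*(z*w) = (z*w)*(x*y) := by
  calc (x*y)*(z*w) = x*(y*z)*w := by noncomm_ring
    _ = x*(-(z*y))*w := by rw [hyz]
    _ = -((x*z)*(y*w)) := by noncomm_ring
    _ = -((-(z*x))*(-(w*y))) := by rw [hxz, hyw]
    _ = -(z*(x*w)*y) := by noncomm_ring
    _ = -(z*(-(w*x))*y) := by rw [hxw]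
    _ = (z*w)*(x*y) := by noncomm_ring

lemma aux_sq_right {x y z : A} (hyx : y*x = -(x*y)) (hxz : x*z = -(z*x))
    (hyz : y*z = -(z*y)) (hyy : y*y + y*y = 0) : (x*y)*(z*y) = (z*y)*(x*y) := by
  have h1 : (x*y)*(z*y) = (z*x)*(y*y) := by
    calc (x*y)*(z*y) = x*(y*z)*y := by noncomm_ring
      _ = x*(-(z*y))*y := by rw [hyz]
      _ = -((x*z)*(y*y)) := by noncomm_ring
      _ = -((-(z*x))*(y*y)) := by rw [hxz]
      _ = (z*x)*(y*y) := by noncomm_ring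
  have h2 : (z*y)*(x*y) = -((z*x)*(y*y)) := by
    calc (z*y)*(x*y) = z*(y*x)*y := by noncomm_ring
      _ = z*(-(x*y))*y := by rw [hyx]
      _ = -((z*x)*(y*y)) := by noncomm_ring
  rw [h1, h2]
  exact eq_neg_of_add_eq_zero_left (by rw [← mul_add, hyy, mul_zero])

lemma aux_sq_left {x y z : A} (hyx : y*x = -(x*y)) (hzx : z*x = -(x*z))
    (hzy : z*y = -(y*z)) (hxx : x*x + x*x = 0) : (x*y)*(x*z) = (x*z)*(x*y) := by
  have h1 : (x*y)*(x*z) = -((x*x)*(y*z)) := by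
    calc (x*y)*(x*z) = x*(y*x)*z := by noncomm_ring
      _ = x*(-(x*y))*z := by rw [hyx]
      _ = -((x*x)*(y*z)) := by noncomm_ring
  have h2 : (x*z)*(x*y) = (x*x)*(y*z) := by
    calc (x*z)*(x*y) = x*(z*x)*y := by noncomm_ring
      _ = x*(-(x*z))*y := by rw [hzx]
      _ = -((x*x)*(z*y)) := by noncomm_ring
      _ = -((x*x)*(-(y*z))) := by rw [hzy]
      _ = (x*x)*(y*z) := by noncomm_ring
  rw [h1, h2]
  exact neg_eq_of_add_eq_zero_left (by rw [← add_mul, hxx, zero_mul])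

lemma aux_single_pair {x z w : A} (hxz : x*z = -(z*x)) (hxw : x*w = -(w*x)) :
    x*(z*w) = (z*w)*x := by
  calc x*(z*w) = (x*z)*w := by noncomm_ring
    _ = (-(z*x))*w := by rw [hxz]
    _ = -(z*(x*w)) := by noncomm_ring
    _ = -(z*(-(w*x))) := by rw [hxw]
    _ = (z*w)*x := by noncomm_ring

lemma aux_pair_single {x y w : A} (hxw : x*w = -(w*x)) (hyw : y*w = -(w*y)) :
    (x*y)*w = w*(x*y) := by
  calc (x*y)*w = x*(y*w) := by noncomm_ring
    _ = x*(-(w*y)) := by rw [hyw]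
    _ = -((x*w)*y) := by noncomm_ring
    _ = -((-(w*x))*y) := by rw [hxw]
    _ = w*(x*y) := by noncomm_ring

lemma aux_x_xw {x w : A} (hxw : x*w = -(w*x)) (hxx : x*x + x*x = 0) :
    x*(x*w) = (x*w)*x := by
  have hwx : w*x = -(x*w) := by rw [hxw, neg_neg]
  have h1 : x*(x*w) = (x*x)*w := by noncomm_ring
  have h2 : (x*w)*x = -((x*x)*w) := by
    calc (x*w)*x = x*(w*x) := by noncomm_ring
      _ = x*(-(x*w)) := by rw [hwx]
      _ = -((x*x)*w) := by noncomm_ring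
  rw [h1, h2]
  exact eq_neg_of_add_eq_zero_left (by rw [← add_mul, hxx, zero_mul])

lemma aux_xw_w {x w : A} (hwx : w*x = -(x*w)) (hww : w*w + w*w = 0) :
    (x*w)*w = w*(x*w) := by
  have h1 : (x*w)*w = x*(w*w) := by noncomm_ring
  have h2 : w*(x*w) = -(x*(w*w)) := by
    calc w*(x*w) = (w*x)*w := by noncomm_ring
      _ = (-(x*w))*w := by rw [hwx]
      _ = -(x*(w*w)) := by noncomm_ring
  rw [h1, h2]
  exact eq_neg_of_add_eq_zero_left (by rw [← mul_add, hww, mul_zero])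

end Aux

/-- under `π : U_q(osp(1|2n), Θ₁) → Cl_q(n)`, the images
`E_i = π(e_i)`, `F_i = π(f_i)`, `K_i = π(k_i)` satisfy
`E_i F_j - (-1)^{[e_i][f_j]} F_j E_i = δ_ij (K_i - K_i⁻¹)/(q - q⁻¹)` for all `i, j`;
in particular `π(e_n) π(f_n) + π(f_n) π(e_n) = (K_n - K_n⁻¹)/(q - q⁻¹)`. -/
theorem stmt10 {K A : Type*} [Field K] [Ring A] [Algebra K A]
    (q s I : K) (hq0 : q ≠ 0) (hq1 : q ^ 2 ≠ 1) (hs : s ^ 2 = q) (hs0 : s ≠ 0)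
    (hI : I ^ 2 = -1)
    (n : ℕ) (hn : 1 ≤ n) (ψ ψd v vinv : ℕ → A)
    (h : CliffordRel K A q n ψ ψd v vinv)
    (E F Kk Kinv : ℕ → A)
    (hE : ∀ i, i < n → E i = if i + 1 < n then ψ i * ψd (i+1)
                             else (I * (s - s⁻¹)⁻¹) • ψ i)
    (hF : ∀ i, i < n → F i = if i + 1 < n then ψ (i+1) * ψd i else ψd i)
    (hK : ∀ i, i < n → Kk i = if i + 1 < n then v i * vinv (i+1) else (I * s) • v i)
    (hKinv : ∀ i, i < n → Kinv i = if i + 1 < n then vinv i * v (i+1)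
                                   else (-(I) * s⁻¹) • vinv i) :
    (∀ i j, i < n → j < n →
      E i * F j - (if i + 1 = n ∧ j + 1 = n then (-1 : K) else 1) • (F j * E i) =
        if i = j then (q - q⁻¹)⁻¹ • (Kk i - Kinv i) else 0) ∧
    E (n-1) * F (n-1) + F (n-1) * E (n-1) =
      (q - q⁻¹)⁻¹ • (Kk (n-1) - Kinv (n-1)) := by
  have hq1' : q ≠ 1 := fun e => hq1 (by rw [e]; ring)
  have hd : q - q⁻¹ ≠ 0 := by
    intro e
    have h2 := sub_eq_zero.mp e
    apply hq1
    rw [sq]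
    nth_rewrite 1 [h2]
    exact inv_mul_cancel₀ hq0
  have hs1 : s - s⁻¹ ≠ 0 := by
    intro e
    have h2 := sub_eq_zero.mp e
    apply hq1'
    rw [← hs, sq]
    nth_rewrite 1 [h2]
    exact inv_mul_cancel₀ hs0
  have hψψ : ∀ i j, i < n → j < n → ψ i * ψ j = -(ψ j * ψ i) :=
    fun i j hi hj => eq_neg_of_add_eq_zero_left (h.ψ_ψ i j hi hj)
  have hψdψd : ∀ i j, i < n → j < n → ψd i * ψd j = -(ψd j * ψd i) :=
    fun i j hi hj => eq_neg_of_add_eq_zero_left (h.ψd_ψd i j hi hj)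
  have hψψd : ∀ i j, i < n → j < n → i ≠ j → ψ i * ψd j = -(ψd j * ψ i) :=
    fun i j hi hj hij => eq_neg_of_add_eq_zero_left (h.ψ_ψd i j hi hj hij)
  have hψdψ : ∀ i j, i < n → j < n → i ≠ j → ψd j * ψ i = -(ψ i * ψd j) :=
    fun i j hi hj hij => eq_neg_of_add_eq_zero_right (h.ψ_ψd i j hi hj hij)
  have hvψ : ∀ i j, i < n → j < n → i ≠ j → v i * ψ j = ψ j * v i := by
    intro i j hi hj hij
    have := h.v_ψ i j hi hj
    rwa [if_neg hij, one_smul] at this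
  have hvψd : ∀ i j, i < n → j < n → i ≠ j → v i * ψd j = ψd j * v i := by
    intro i j hi hj hij
    have := h.v_ψd i j hi hj
    rwa [if_neg hij, one_smul] at this
  have hvinvψ : ∀ i j, i < n → j < n → i ≠ j → vinv i * ψ j = ψ j * vinv i := by
    intro i j hi hj hij
    calc vinv i * ψ j = vinv i * ψ j * (v i * vinv i) := by rw [h.v_vinv i hi, mul_one]
      _ = vinv i * (ψ j * v i) * vinv i := by noncomm_ring
      _ = vinv i * (v i * ψ j) * vinv i := by rw [hvψ i j hi hj hij]
      _ = (vinv i * v i) * (ψ j * vinv i) := by noncomm_ring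
      _ = ψ j * vinv i := by rw [h.vinv_v i hi, one_mul]
  have hvvinv : ∀ i j, i < n → j < n → vinv i * v j = v j * vinv i := by
    intro i j hi hj
    calc vinv i * v j = vinv i * v j * (v i * vinv i) := by rw [h.v_vinv i hi, mul_one]
      _ = vinv i * (v j * v i) * vinv i := by noncomm_ring
      _ = vinv i * (v i * v j) * vinv i := by rw [h.v_comm j i hj hi]
      _ = (vinv i * v i) * (v j * vinv i) := by noncomm_ring
      _ = v j * vinv i := by rw [h.vinv_v i hi, one_mul]
  have hvinvvinv : ∀ i j, i < n → j < n → vinv i * vinv j = vinv j * vinv i := by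
    intro i j hi hj
    calc vinv i * vinv j = vinv i * vinv j * (v i * vinv i) := by rw [h.v_vinv i hi, mul_one]
      _ = vinv i * (vinv j * v i) * vinv i := by noncomm_ring
      _ = vinv i * (v i * vinv j) * vinv i := by rw [hvvinv j i hj hi]
      _ = (vinv i * v i) * (vinv j * vinv i) := by noncomm_ring
      _ = vinv j * vinv i := by rw [h.vinv_v i hi, one_mul]
  have hX : ∀ i, i < n → ψd i * ψ i = (q - q⁻¹)⁻¹ • (vinv i - v i) := by
    intro i hi
    have e1 := h.rel_q i hi
    have e2 := h.rel_qinv i hi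
    have key : (q - q⁻¹) • (ψd i * ψ i) = vinv i - v i := by
      rw [sub_smul, ← e1, ← e2]; abel
    rw [← key, smul_smul, inv_mul_cancel₀ hd, one_smul]
  have hY : ∀ i, i < n → ψ i * ψd i = (q - q⁻¹)⁻¹ • (q • v i - q⁻¹ • vinv i) := by
    intro i hi
    have e1 := h.rel_q i hi
    have e2 := h.rel_qinv i hi
    have key : (q - q⁻¹) • (ψ i * ψd i) = q • v i - q⁻¹ • vinv i := by
      rw [← e2, ← e1]
      simp only [smul_add, smul_smul, mul_inv_cancel₀ hq0, inv_mul_cancel₀ hq0, one_smul,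
        sub_smul]
      abel
    rw [← key, smul_smul, inv_mul_cancel₀ hd, one_smul]
  have main : ∀ i j, i < n → j < n →
      E i * F j - (if i + 1 = n ∧ j + 1 = n then (-1 : K) else 1) • (F j * E i) =
        if i = j then (q - q⁻¹)⁻¹ • (Kk i - Kinv i) else 0 := by
    intro i j hi hj
    by_cases hij : i = j
    · subst hij
      rw [if_pos rfl]
      by_cases hin : i + 1 < n
      · rw [hE i hi, if_pos hin, hF i hi, if_pos hin, hK i hi, if_pos hin,
          hKinv i hi, if_pos hin, if_neg (show ¬(i + 1 = n ∧ i + 1 = n) by omega), one_smul]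
        have hEF : (ψ i * ψd (i+1)) * (ψ (i+1) * ψd i)
            = ((q-q⁻¹)⁻¹ * (q-q⁻¹)⁻¹) • ((vinv (i+1) - v (i+1)) * (q • v i - q⁻¹ • vinv i)) := by
          have hcomm : ψ i * (vinv (i+1) - v (i+1)) = (vinv (i+1) - v (i+1)) * ψ i := by
            rw [mul_sub, sub_mul, hvinvψ (i+1) i hin hi (by omega), hvψ (i+1) i hin hi (by omega)]
          calc (ψ i * ψd (i+1)) * (ψ (i+1) * ψd i) = ψ i * ((ψd (i+1) * ψ (i+1)) * ψd i) := by
                noncomm_ring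
            _ = ψ i * (((q-q⁻¹)⁻¹ • (vinv (i+1) - v (i+1))) * ψd i) := by rw [hX (i+1) hin]
            _ = (q-q⁻¹)⁻¹ • ((ψ i * (vinv (i+1) - v (i+1))) * ψd i) := by
                rw [smul_mul_assoc, mul_smul_comm, ← mul_assoc]
            _ = (q-q⁻¹)⁻¹ • ((vinv (i+1) - v (i+1)) * (ψ i * ψd i)) := by rw [hcomm, mul_assoc]
            _ = (q-q⁻¹)⁻¹ • ((vinv (i+1) - v (i+1)) * ((q-q⁻¹)⁻¹ • (q • v i - q⁻¹ • vinv i))) := by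
                rw [hY i hi]
            _ = ((q-q⁻¹)⁻¹ * (q-q⁻¹)⁻¹) • ((vinv (i+1) - v (i+1)) * (q • v i - q⁻¹ • vinv i)) := by
                rw [mul_smul_comm, smul_smul]
        have hFE : (ψ (i+1) * ψd i) * (ψ i * ψd (i+1))
            = ((q-q⁻¹)⁻¹ * (q-q⁻¹)⁻¹) • ((vinv i - v i) * (q • v (i+1) - q⁻¹ • vinv (i+1))) := by
          have hcomm : ψ (i+1) * (vinv i - v i) = (vinv i - v i) * ψ (i+1) := by
            rw [mul_sub, sub_mul, hvinvψ i (i+1) hi hin (by omega), hvψ i (i+1) hi hin (by omega)]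
          calc (ψ (i+1) * ψd i) * (ψ i * ψd (i+1)) = ψ (i+1) * ((ψd i * ψ i) * ψd (i+1)) := by
                noncomm_ring
            _ = ψ (i+1) * (((q-q⁻¹)⁻¹ • (vinv i - v i)) * ψd (i+1)) := by rw [hX i hi]
            _ = (q-q⁻¹)⁻¹ • ((ψ (i+1) * (vinv i - v i)) * ψd (i+1)) := by
                rw [smul_mul_assoc, mul_smul_comm, ← mul_assoc]
            _ = (q-q⁻¹)⁻¹ • ((vinv i - v i) * (ψ (i+1) * ψd (i+1))) := by rw [hcomm, mul_assoc]
            _ = (q-q⁻¹)⁻¹ • ((vinv i - v i) * ((q-q⁻¹)⁻¹ • (q • v (i+1) - q⁻¹ • vinv (i+1)))) := by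
                rw [hY (i+1) hin]
            _ = ((q-q⁻¹)⁻¹ * (q-q⁻¹)⁻¹) • ((vinv i - v i) * (q • v (i+1) - q⁻¹ • vinv (i+1))) := by
                rw [mul_smul_comm, smul_smul]
        rw [hEF, hFE, ← smul_sub]
        have key : (vinv (i+1) - v (i+1)) * (q • v i - q⁻¹ • vinv i)
            - (vinv i - v i) * (q • v (i+1) - q⁻¹ • vinv (i+1))
            = (q - q⁻¹) • (v i * vinv (i+1) - vinv i * v (i+1)) := by
          have c1 : vinv (i+1) * v i = v i * vinv (i+1) := hvvinv (i+1) i hin hi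
          have c2 : vinv (i+1) * vinv i = vinv i * vinv (i+1) := hvinvvinv (i+1) i hin hi
          have c3 : v (i+1) * v i = v i * v (i+1) := h.v_comm (i+1) i hin hi
          have c4 : v (i+1) * vinv i = vinv i * v (i+1) := (hvvinv i (i+1) hi hin).symm
          simp only [mul_sub, sub_mul, mul_smul_comm, smul_sub]
          rw [c1, c2, c3, c4]
          module
        rw [key, smul_smul]
        congr 1
        rw [mul_assoc, inv_mul_cancel₀ hd, mul_one]
      · have hin' : i + 1 = n := by omega
        rw [hE i hi, if_neg hin, hF i hi, if_neg hin, hK i hi, if_neg hin,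
          hKinv i hi, if_neg hin, if_pos ⟨hin', hin'⟩]
        rw [smul_mul_assoc, mul_smul_comm, hY i hi, hX i hi]
        have A1 : (s - s⁻¹)⁻¹ * (q - 1) = s := by
          rw [inv_mul_eq_iff_eq_mul₀ hs1, ← hs]
          field_simp
        have A2 : (s - s⁻¹)⁻¹ * (1 - q⁻¹) = s⁻¹ := by
          rw [inv_mul_eq_iff_eq_mul₀ hs1, ← hs]
          field_simp
        match_scalars
        · linear_combination (I * (q - q⁻¹)⁻¹) * A1
        · linear_combination (I * (q - q⁻¹)⁻¹) * A2
    · rw [if_neg hij, if_neg (show ¬(i + 1 = n ∧ j + 1 = n) by omega), one_smul, sub_eq_zero]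
      by_cases hin : i + 1 < n <;> by_cases hjn : j + 1 < n
      · rw [hE i hi, if_pos hin, hF j hj, if_pos hjn]
        by_cases e1 : j = i + 1
        · subst e1
          exact aux_sq_right (hψdψ i (i+1) hi hin (by omega)) (hψψ i (i+1+1) hi hjn)
            (hψdψ (i+1+1) (i+1) hjn hin (by omega)) (h.ψd_ψd (i+1) (i+1) hin hin)
        · by_cases e2 : i = j + 1
          · subst e2
            exact aux_sq_left (hψdψ (j+1) (j+1+1) hjn hin (by omega))
              (hψdψ (j+1) j hjn hj (by omega)) (hψdψd j (j+1+1) hj hin)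
              (h.ψ_ψ (j+1) (j+1) hjn hjn)
          · exact aux_pair_pair (hψψ i (j+1) hi hjn) (hψψd i j hi hj hij)
              (hψdψ (j+1) (i+1) hjn hin (by omega)) (hψdψd (i+1) j hin hj)
      · rw [hE i hi, if_pos hin, hF j hj, if_neg hjn]
        by_cases e1 : i + 1 = j
        · subst e1
          exact aux_xw_w (hψdψ i (i+1) hi hin (by omega)) (h.ψd_ψd (i+1) (i+1) hin hin)
        · exact aux_pair_single (hψψd i j hi hj hij) (hψdψd (i+1) j hin hj)
      · rw [hE i hi, if_neg hin, hF j hj, if_pos hjn, smul_mul_assoc, mul_smul_comm]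
        congr 1
        by_cases e1 : j + 1 = i
        · subst e1
          exact aux_x_xw (hψψd (j+1) j hjn hj (by omega)) (h.ψ_ψ (j+1) (j+1) hjn hjn)
        · exact aux_single_pair (hψψ i (j+1) hi hjn) (hψψd i j hi hj hij)
      · exfalso; omega
  refine ⟨main, ?_⟩
  have hn1 : n - 1 < n := by omega
  have h1 := main (n-1) (n-1) hn1 hn1
  have he : n - 1 + 1 = n := by omega
  rw [if_pos ⟨he, he⟩, if_pos rfl, neg_smul, one_smul, sub_neg_eq_add] at h1
  exact h1
end

section
/- The spinor representation V_q(n) of U_q(osp(1|2n), Θ₁), obtained by pulling back the Fock space of Cl_q(n) along the homomorphism π, is irreducible, has dimension 2^n, and the vacuum vector |0⟩ is a highest weight vector of weight (1, 1, ..., 1, √(-1) q^{1/2}), i.e., e_i |0⟩ = 0 for all i, k_i |0⟩ = |0⟩ for i < n, and k_n |0⟩ = √(-1) q^{1/2} |0⟩. -/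
/-- The action of `π(e_i)` on the Fock space (`i = 0,…,n-1`, 0-indexed; the last index is the
odd generator): `e_i ↦ ψ_i ψ_{i+1}†` for `i+1 < n`, `e_n ↦ √-1 (q^{1/2}-q^{-1/2})⁻¹ ψ_n`. -/
noncomputable def Eop {K : Type*} [Field K] {n : ℕ} (s I : K) (i : Fin n) :
    FockV K n → FockV K n :=
  if h : (i : ℕ) + 1 < n then fun f => ψop i (ψdop ⟨(i : ℕ) + 1, h⟩ f)
  else fun f => (I * (s - s⁻¹)⁻¹) • ψop i f

/-- The action of `π(f_i)` on the Fock space: `f_i ↦ ψ_{i+1} ψ_i†` for `i+1 < n`,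
`f_n ↦ ψ_n†`. -/
noncomputable def Fop {K : Type*} [Field K] {n : ℕ} (i : Fin n) :
    FockV K n → FockV K n :=
  if h : (i : ℕ) + 1 < n then fun f => ψop ⟨(i : ℕ) + 1, h⟩ (ψdop i f)
  else fun f => ψdop i f

/-- The action of `π(k_i)` on the Fock space: `k_i ↦ v_i v_{i+1}⁻¹` for `i+1 < n`,
`k_n ↦ √-1 q^{1/2} v_n`. -/
noncomputable def Kop {K : Type*} [Field K] {n : ℕ} (q s I : K) (i : Fin n) :
    FockV K n → FockV K n :=
  if h : (i : ℕ) + 1 < n then fun f => vop q i (vinvop q ⟨(i : ℕ) + 1, h⟩ f)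
  else fun f => (I * s) • vop q i f

/-- The action of `π(k_i⁻¹)` on the Fock space. -/
noncomputable def Kinvop {K : Type*} [Field K] {n : ℕ} (q s I : K) (i : Fin n) :
    FockV K n → FockV K n :=
  if h : (i : ℕ) + 1 < n then fun f => vinvop q i (vop q ⟨(i : ℕ) + 1, h⟩ f)
  else fun f => (-(I) * s⁻¹) • vinvop q i f

/-- The vacuum vector `|0⟩`. -/
noncomputable def fockVac (K : Type*) [Field K] (n : ℕ) : FockV K n :=
  fun r => if r = 0 then 1 else 0

namespace SpinorAux

open Finset Function

variable {K : Type*} [Field K] {n : ℕ}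

/-! ### Pointwise evaluation lemmas for `FockV` -/

@[simp] lemma FockV.add_apply (f g : FockV K n) (r : Fin n → Fin 2) :
    (f + g) r = f r + g r := rfl

@[simp] lemma FockV.sub_apply (f g : FockV K n) (r : Fin n → Fin 2) :
    (f - g) r = f r - g r := rfl

@[simp] lemma FockV.smul_apply (c : K) (f : FockV K n) (r : Fin n → Fin 2) :
    (c • f) r = c * f r := rfl

@[simp] lemma FockV.zero_apply (r : Fin n → Fin 2) : (0 : FockV K n) r = 0 := rfl

lemma FockV.finset_sum_apply {α : Type*} (s : Finset α) (F : α → FockV K n)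
    (r : Fin n → Fin 2) : (∑ a ∈ s, F a) r = ∑ a ∈ s, F a r := by
  classical
  induction s using Finset.cons_induction with
  | empty => rfl
  | cons a s ha ih => rw [Finset.sum_cons, Finset.sum_cons, FockV.add_apply, ih]

/-! ### The delta basis -/

/-- The basis vector `|r⟩`. -/
noncomputable def δ (r : Fin n → Fin 2) : FockV K n := fun r' => if r' = r then 1 else 0

lemma fockVac_eq_δ : fockVac K n = δ 0 := rfl

lemma fin2_eq_one {a : Fin 2} (h : a ≠ 0) : a = 1 := by
  fin_cases a
  · exact absurd rfl h
  · rfl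

lemma fockSgn_ne_zero (r : Fin n → Fin 2) (i : Fin n) : (fockSgn r i : K) ≠ 0 :=
  pow_ne_zero _ (neg_ne_zero.mpr one_ne_zero)

lemma fockSgn_update (r : Fin n → Fin 2) (i : Fin n) (b : Fin 2) :
    (fockSgn (update r i b) i : K) = fockSgn r i := by
  unfold fockSgn
  congr 1
  refine Finset.sum_congr rfl fun j _ => ?_
  by_cases h : (j : ℕ) < (i : ℕ)
  · have hj : j ≠ i := fun e => by simp [e] at h
    simp [h, update_of_ne hj]
  · simp [h]

lemma ψop_δ_one {i : Fin n} {r : Fin n → Fin 2} (h : r i = 1) :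
    ψop i (δ r : FockV K n) = (fockSgn r i : K) • δ (update r i 0) := by
  funext r'
  simp only [ψop, δ, FockV.smul_apply]
  by_cases h0' : r' i = 0
  · rw [if_pos h0']
    have hself : update r' i 0 = r' := by
      funext j
      by_cases hj : j = i
      · subst hj; simpa using h0'.symm
      · simp [update_of_ne hj]
    by_cases he : r' = update r i 0
    · subst he
      have h1 : update (update r i 0) i 1 = r := by
        rw [update_idem, ← h, update_eq_self]
      rw [if_pos h1, if_pos rfl, fockSgn_update]
    · have h1 : update r' i 1 ≠ r := by
        intro e
        apply he
        have e2 := congrArg (fun g => update g i 0) e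
        simpa [update_idem, hself] using e2
      rw [if_neg h1, if_neg he, mul_zero, mul_zero]
  · rw [if_neg h0']
    have : r' ≠ update r i 0 := by
      intro e; apply h0'; rw [e]; simp
    rw [if_neg this, mul_zero]

lemma ψop_δ_zero {i : Fin n} {r : Fin n → Fin 2} (h : r i = 0) :
    ψop i (δ r : FockV K n) = 0 := by
  funext r'
  simp only [ψop, δ, FockV.zero_apply]
  by_cases h0 : r' i = 0
  · have : update r' i 1 ≠ r := by
      intro e
      have := congrFun e i
      simp [h] at this
    rw [if_pos h0, if_neg this, mul_zero]
  · rw [if_neg h0]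

lemma ψdop_δ_zero {i : Fin n} {r : Fin n → Fin 2} (h : r i = 0) :
    ψdop i (δ r : FockV K n) = (fockSgn r i : K) • δ (update r i 1) := by
  funext r'
  simp only [ψdop, δ, FockV.smul_apply]
  by_cases h0' : r' i = 1
  · rw [if_pos h0']
    have hself : update r' i 1 = r' := by
      funext j
      by_cases hj : j = i
      · subst hj; simpa using h0'.symm
      · simp [update_of_ne hj]
    by_cases he : r' = update r i 1
    · subst he
      have h1 : update (update r i 1) i 0 = r := by
        rw [update_idem, ← h, update_eq_self]
      rw [if_pos h1, if_pos rfl, fockSgn_update]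
    · have h1 : update r' i 0 ≠ r := by
        intro e
        apply he
        have e2 := congrArg (fun g => update g i 1) e
        simpa [update_idem, hself] using e2
      rw [if_neg h1, if_neg he, mul_zero, mul_zero]
  · rw [if_neg h0']
    have : r' ≠ update r i 1 := by
      intro e; apply h0'; rw [e]; simp
    rw [if_neg this, mul_zero]

lemma ψdop_δ_one {i : Fin n} {r : Fin n → Fin 2} (h : r i = 1) :
    ψdop i (δ r : FockV K n) = 0 := by
  funext r'
  simp only [ψdop, δ, FockV.zero_apply]
  by_cases h0 : r' i = 1
  · have : update r' i 0 ≠ r := by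
      intro e
      have := congrFun e i
      simp [h] at this
    rw [if_pos h0, if_neg this, mul_zero]
  · rw [if_neg h0]

lemma ψop_smul (i : Fin n) (c : K) (f : FockV K n) : ψop i (c • f) = c • ψop i f := by
  funext r
  simp only [ψop, FockV.smul_apply]
  by_cases h : r i = 0
  · rw [if_pos h, if_pos h]; ring
  · rw [if_neg h, if_neg h, mul_zero]

lemma ψop_zero (i : Fin n) : ψop i (0 : FockV K n) = 0 := by
  funext r
  simp only [ψop, FockV.zero_apply, mul_zero, ite_self]

end SpinorAux

namespace SpinorAux

open Finset Function

open scoped Classical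

variable {K : Type*} [Field K] {n : ℕ}

lemma Fin.ne_succ (i : Fin n) (h : (i : ℕ) + 1 < n) : i ≠ ⟨(i : ℕ) + 1, h⟩ :=
  Fin.ne_of_val_ne (Nat.ne_of_lt (Nat.lt_succ_self _))

lemma Eop_δ_mid {s I : K} {i : Fin n} (h : (i : ℕ) + 1 < n) {r : Fin n → Fin 2}
    (h1 : r i = 1) (h0 : r ⟨(i : ℕ) + 1, h⟩ = 0) :
    ∃ c : K, c ≠ 0 ∧
      Eop s I i (δ r : FockV K n) = c • δ (update (update r ⟨(i : ℕ) + 1, h⟩ 1) i 0) := by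
  have hne : i ≠ (⟨(i : ℕ) + 1, h⟩ : Fin n) := Fin.ne_succ i h
  refine ⟨_, mul_ne_zero (fockSgn_ne_zero (K := K) r ⟨(i : ℕ) + 1, h⟩)
    (fockSgn_ne_zero (K := K) (update r ⟨(i : ℕ) + 1, h⟩ 1) i), ?_⟩
  simp only [Eop, dif_pos h]
  rw [ψdop_δ_zero h0, ψop_smul,
    ψop_δ_one (by rw [update_of_ne hne]; exact h1), smul_smul]

lemma Eop_δ_last {s I : K} (hI0 : I ≠ 0) (hss : s - s⁻¹ ≠ 0) {i : Fin n}
    (h : ¬ (i : ℕ) + 1 < n) {r : Fin n → Fin 2} (h1 : r i = 1) :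
    ∃ c : K, c ≠ 0 ∧ Eop s I i (δ r : FockV K n) = c • δ (update r i 0) := by
  refine ⟨_, mul_ne_zero (mul_ne_zero hI0 (inv_ne_zero hss))
    (fockSgn_ne_zero (K := K) r i), ?_⟩
  simp only [Eop, dif_neg h]
  rw [ψop_δ_one h1, smul_smul]

lemma Fop_δ_mid {i : Fin n} (h : (i : ℕ) + 1 < n) {r : Fin n → Fin 2}
    (h0 : r i = 0) (h1 : r ⟨(i : ℕ) + 1, h⟩ = 1) :
    ∃ c : K, c ≠ 0 ∧
      Fop i (δ r : FockV K n) = c • δ (update (update r i 1) ⟨(i : ℕ) + 1, h⟩ 0) := by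
  have hne : i ≠ (⟨(i : ℕ) + 1, h⟩ : Fin n) := Fin.ne_succ i h
  refine ⟨_, mul_ne_zero (fockSgn_ne_zero (K := K) r i)
    (fockSgn_ne_zero (K := K) (update r i 1) ⟨(i : ℕ) + 1, h⟩), ?_⟩
  simp only [Fop, dif_pos h]
  rw [ψdop_δ_zero h0, ψop_smul,
    ψop_δ_one (by rw [update_of_ne hne.symm]; exact h1), smul_smul]

lemma Fop_δ_last {i : Fin n} (h : ¬ (i : ℕ) + 1 < n) {r : Fin n → Fin 2}
    (h0 : r i = 0) :
    ∃ c : K, c ≠ 0 ∧ Fop i (δ r : FockV K n) = c • δ (update r i 1) := by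
  refine ⟨_, fockSgn_ne_zero (K := K) r i, ?_⟩
  simp only [Fop, dif_neg h]
  rw [ψdop_δ_zero h0]

/-! ### The diagonal `Kop` action -/

/-- The eigenvalue of `Kop i` on `|r⟩`. -/
noncomputable def lamK (q s I : K) (i : Fin n) (r : Fin n → Fin 2) : K :=
  if h : (i : ℕ) + 1 < n then q⁻¹ ^ ((r i : ℕ)) * q ^ ((r ⟨(i : ℕ) + 1, h⟩ : ℕ))
  else I * s * q⁻¹ ^ ((r i : ℕ))

lemma Kop_apply (q s I : K) (i : Fin n) (f : FockV K n) (r : Fin n → Fin 2) :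
    Kop q s I i f r = lamK q s I i r * f r := by
  by_cases h : (i : ℕ) + 1 < n
  · simp only [Kop, lamK, vop, vinvop, dif_pos h]; ring
  · simp only [Kop, lamK, vop, vinvop, dif_neg h, FockV.smul_apply]; ring

lemma Kop_δ (q s I : K) (i : Fin n) (r : Fin n → Fin 2) :
    Kop q s I i (δ r : FockV K n) = lamK q s I i r • δ r := by
  funext r'
  rw [Kop_apply, FockV.smul_apply]
  by_cases he : r' = r
  · subst he; rfl
  · simp [δ, he]

lemma qinv_pow_ne {q : K} (hq0 : q ≠ 0) (hq1 : q ≠ 1) {a b : Fin 2} (hab : a ≠ b) :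
    (q⁻¹ : K) ^ ((a : ℕ)) ≠ q⁻¹ ^ ((b : ℕ)) := by
  have hqi : (q⁻¹ : K) ≠ 1 := by
    intro e
    apply hq1
    rw [← inv_inv q, e, inv_one]
  fin_cases a <;> fin_cases b <;>
    simp only [Fin.isValue, Fin.val_zero, Fin.val_one, pow_zero, pow_one] <;>
    first
      | exact absurd rfl hab
      | exact fun e => hqi e.symm
      | exact fun e => hqi e

lemma lamK_sep {q s I : K} (hq0 : q ≠ 0) (hq1 : q ≠ 1) (hs0 : s ≠ 0) (hI0 : I ≠ 0)
    {r r' : Fin n → Fin 2} (hne : r ≠ r') :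
    ∃ i : Fin n, lamK q s I i r ≠ lamK q s I i r' := by
  have hD : (univ.filter fun j : Fin n => r j ≠ r' j).Nonempty := by
    obtain ⟨j, hj⟩ := Function.ne_iff.mp hne
    exact ⟨j, mem_filter.mpr ⟨mem_univ j, hj⟩⟩
  set i := (univ.filter fun j : Fin n => r j ≠ r' j).max' hD with hidef
  have him := Finset.max'_mem (univ.filter fun j : Fin n => r j ≠ r' j) hD
  have hi : r i ≠ r' i := (mem_filter.mp him).2
  have hgt : ∀ j : Fin n, (i : ℕ) < (j : ℕ) → r j = r' j := by
    intro j hj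
    by_contra hj'
    have hle : j ≤ i := Finset.le_max' _ j (mem_filter.mpr ⟨mem_univ j, hj'⟩)
    have : (j : ℕ) ≤ (i : ℕ) := hle
    omega
  refine ⟨i, ?_⟩
  unfold lamK
  by_cases h : (i : ℕ) + 1 < n
  · rw [dif_pos h, dif_pos h, hgt ⟨(i : ℕ) + 1, h⟩ (Nat.lt_succ_self _)]
    intro e
    exact qinv_pow_ne hq0 hq1 hi (mul_right_cancel₀ (pow_ne_zero _ hq0) e)
  · rw [dif_neg h, dif_neg h]
    intro e
    exact qinv_pow_ne hq0 hq1 hi (mul_left_cancel₀ (mul_ne_zero hI0 hs0) e)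

/-! ### The measure -/

/-- The measure `M r = ∑ j, r j * (n - j)`, which strictly decreases under the moves. -/
def Mw (r : Fin n → Fin 2) : ℕ := ∑ j : Fin n, ((r j : ℕ)) * (n - (j : ℕ))

lemma Mw_update (r : Fin n → Fin 2) (i : Fin n) (b : Fin 2) :
    Mw (update r i b) + ((r i : ℕ)) * (n - (i : ℕ))
      = Mw r + ((b : ℕ)) * (n - (i : ℕ)) := by
  unfold Mw
  rw [← Finset.add_sum_erase _ (fun j => ((update r i b j : ℕ)) * (n - (j : ℕ))) (mem_univ i),
    ← Finset.add_sum_erase _ (fun j => ((r j : ℕ)) * (n - (j : ℕ))) (mem_univ i)]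
  have hsum : ∑ j ∈ univ.erase i, ((update r i b j : ℕ)) * (n - (j : ℕ))
      = ∑ j ∈ univ.erase i, ((r j : ℕ)) * (n - (j : ℕ)) :=
    Finset.sum_congr rfl fun j hj => by rw [update_of_ne (Finset.ne_of_mem_erase hj)]
  rw [hsum, update_self]
  ring

lemma Mw_eq_zero {r : Fin n → Fin 2} (h : Mw r = 0) : r = 0 := by
  funext j
  have hj := (Finset.sum_eq_zero_iff).mp h j (mem_univ j)
  have hjn : (j : ℕ) < n := j.isLt
  have hv : ((r j : ℕ)) = 0 := by
    rcases Nat.mul_eq_zero.mp hj with h' | h'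
    · exact h'
    · omega
  exact Fin.ext (by simpa using hv)

lemma mem_of_smul_mem {W : Submodule K (FockV K n)} {c : K} (hc : c ≠ 0)
    {f : FockV K n} (h : c • f ∈ W) : f ∈ W := by
  have h2 := W.smul_mem c⁻¹ h
  rwa [inv_smul_smul₀ hc] at h2

lemma exists_max_one {r : Fin n → Fin 2} (h : r ≠ 0) :
    ∃ i : Fin n, r i = 1 ∧ ∀ j : Fin n, (i : ℕ) < (j : ℕ) → r j = 0 := by
  have hD : (univ.filter fun j : Fin n => r j ≠ 0).Nonempty := by
    obtain ⟨j, hj⟩ := Function.ne_iff.mp h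
    exact ⟨j, mem_filter.mpr ⟨mem_univ j, hj⟩⟩
  refine ⟨(univ.filter fun j : Fin n => r j ≠ 0).max' hD,
    fin2_eq_one (mem_filter.mp
      (Finset.max'_mem (univ.filter fun j : Fin n => r j ≠ 0) hD)).2, ?_⟩
  intro j hj
  by_contra hj'
  have hle : j ≤ (univ.filter fun j : Fin n => r j ≠ 0).max' hD :=
    Finset.le_max' _ j (mem_filter.mpr ⟨mem_univ j, hj'⟩)
  have : (j : ℕ) ≤ _ := hle
  omega

end SpinorAux

namespace SpinorAux

open Finset Function

open scoped Classical

variable {K : Type*} [Field K] {n : ℕ}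

lemma δ_zero_mem {s I : K} (hI0 : I ≠ 0) (hss : s - s⁻¹ ≠ 0)
    {W : Submodule K (FockV K n)}
    (hE : ∀ (i : Fin n) (f : FockV K n), f ∈ W → Eop s I i f ∈ W) :
    ∀ (m : ℕ) (r : Fin n → Fin 2), Mw r ≤ m → (δ r : FockV K n) ∈ W →
      (δ 0 : FockV K n) ∈ W := by
  intro m
  induction m with
  | zero =>
    intro r hm hr
    rwa [Mw_eq_zero (Nat.le_zero.mp hm)] at hr
  | succ m ih =>
    intro r hm hr
    by_cases h0 : r = 0
    · rwa [h0] at hr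
    · obtain ⟨i, hi1, hit⟩ := exists_max_one h0
      have hin : (i : ℕ) < n := i.isLt
      by_cases h : (i : ℕ) + 1 < n
      · have h0' : r ⟨(i : ℕ) + 1, h⟩ = 0 := hit _ (Nat.lt_succ_self _)
        obtain ⟨c, hc, hce⟩ := Eop_δ_mid (s := s) (I := I) h hi1 h0'
        have hmem : (δ (update (update r ⟨(i : ℕ) + 1, h⟩ 1) i 0) : FockV K n) ∈ W :=
          mem_of_smul_mem hc (by rw [← hce]; exact hE i _ hr)
        refine ih _ ?_ hmem
        have e1 := Mw_update r ⟨(i : ℕ) + 1, h⟩ 1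
        have e2 := Mw_update (update r ⟨(i : ℕ) + 1, h⟩ 1) i 0
        rw [h0'] at e1
        rw [update_of_ne (Fin.ne_succ i h), hi1] at e2
        simp only [Fin.val_zero, Fin.val_one, Fin.val_mk] at e1 e2
        omega
      · obtain ⟨c, hc, hce⟩ := Eop_δ_last hI0 hss h hi1
        have hmem : (δ (update r i 0) : FockV K n) ∈ W :=
          mem_of_smul_mem hc (by rw [← hce]; exact hE i _ hr)
        refine ih _ ?_ hmem
        have e1 := Mw_update r i 0
        rw [hi1] at e1
        simp only [Fin.val_zero, Fin.val_one] at e1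
        omega

lemma δ_all_mem {W : Submodule K (FockV K n)}
    (hF : ∀ (i : Fin n) (f : FockV K n), f ∈ W → Fop i f ∈ W)
    (h0W : (δ 0 : FockV K n) ∈ W) :
    ∀ (m : ℕ) (r : Fin n → Fin 2), Mw r ≤ m → (δ r : FockV K n) ∈ W := by
  intro m
  induction m with
  | zero =>
    intro r hm
    rw [Mw_eq_zero (Nat.le_zero.mp hm)]
    exact h0W
  | succ m ih =>
    intro r hm
    by_cases h0 : r = 0
    · rw [h0]; exact h0W
    · obtain ⟨i, hi1, hit⟩ := exists_max_one h0
      have hin : (i : ℕ) < n := i.isLt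
      by_cases h : (i : ℕ) + 1 < n
      · have hrj : r ⟨(i : ℕ) + 1, h⟩ = 0 := hit _ (Nat.lt_succ_self _)
        set rp : Fin n → Fin 2 := update (update r i 0) ⟨(i : ℕ) + 1, h⟩ 1 with hrp
        have hrpi : rp i = 0 := by
          rw [hrp, update_of_ne (Fin.ne_succ i h), update_self]
        have hrpj : rp ⟨(i : ℕ) + 1, h⟩ = 1 := by rw [hrp, update_self]
        obtain ⟨c, hc, hce⟩ := Fop_δ_mid (K := K) h hrpi hrpj
        have htarget : update (update rp i 1) ⟨(i : ℕ) + 1, h⟩ 0 = r := by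
          funext k
          by_cases hk : k = (⟨(i : ℕ) + 1, h⟩ : Fin n)
          · subst hk; rw [update_self]; exact hrj.symm
          · rw [update_of_ne hk]
            by_cases hk' : k = i
            · subst hk'; rw [update_self]; exact hi1.symm
            · rw [update_of_ne hk', hrp, update_of_ne hk, update_of_ne hk']
        have hrpmem : (δ rp : FockV K n) ∈ W := by
          refine ih rp ?_
          have e1 := Mw_update r i 0
          have e2 := Mw_update (update r i 0) ⟨(i : ℕ) + 1, h⟩ 1
          rw [hi1] at e1
          rw [update_of_ne (Fin.ne_succ i h).symm, hrj] at e2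
          rw [← hrp] at e2
          simp only [Fin.val_zero, Fin.val_one, Fin.val_mk] at e1 e2
          omega
        have hmem := hF i _ hrpmem
        rw [hce, htarget] at hmem
        exact mem_of_smul_mem hc hmem
      · set rp : Fin n → Fin 2 := update r i 0 with hrp
        have hrpi : rp i = 0 := by rw [hrp, update_self]
        obtain ⟨c, hc, hce⟩ := Fop_δ_last (K := K) h hrpi
        have htarget : update rp i 1 = r := by
          rw [hrp, update_idem, ← hi1, update_eq_self]
        have hrpmem : (δ rp : FockV K n) ∈ W := by
          refine ih rp ?_
          have e1 := Mw_update r i 0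
          rw [hi1] at e1
          rw [← hrp] at e1
          simp only [Fin.val_zero, Fin.val_one] at e1
          omega
        have hmem := hF i _ hrpmem
        rw [hce, htarget] at hmem
        exact mem_of_smul_mem hc hmem

lemma exists_δ_mem {q s I : K} (hq0 : q ≠ 0) (hq1 : q ≠ 1) (hs0 : s ≠ 0) (hI0 : I ≠ 0)
    {W : Submodule K (FockV K n)}
    (hK : ∀ (i : Fin n) (f : FockV K n), f ∈ W → Kop q s I i f ∈ W) :
    ∀ (m : ℕ) (f : FockV K n), f ∈ W → f ≠ 0 →
      (univ.filter fun r : Fin n → Fin 2 => f r ≠ 0).card ≤ m →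
      ∃ r : Fin n → Fin 2, (δ r : FockV K n) ∈ W := by
  intro m
  induction m with
  | zero =>
    intro f hf hf0 hc
    exfalso
    obtain ⟨r, hr⟩ := Function.ne_iff.mp hf0
    simp only [FockV.zero_apply] at hr
    have hmem : r ∈ univ.filter fun r : Fin n → Fin 2 => f r ≠ 0 :=
      mem_filter.mpr ⟨mem_univ r, hr⟩
    have := Finset.card_pos.mpr ⟨r, hmem⟩
    omega
  | succ m ih =>
    intro f hf hf0 hc
    by_cases hcard : (univ.filter fun r : Fin n → Fin 2 => f r ≠ 0).card ≤ 1
    · obtain ⟨r0, hr0⟩ := Function.ne_iff.mp hf0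
      simp only [FockV.zero_apply] at hr0
      refine ⟨r0, ?_⟩
      have hfe : f = f r0 • δ r0 := by
        funext r
        by_cases he : r = r0
        · subst he; simp [δ, FockV.smul_apply]
        · have hfr : f r = 0 := by
            by_contra hfr
            have h2 : 1 < (univ.filter fun r : Fin n → Fin 2 => f r ≠ 0).card :=
              Finset.one_lt_card.mpr ⟨r, mem_filter.mpr ⟨mem_univ _, hfr⟩, r0,
                mem_filter.mpr ⟨mem_univ _, hr0⟩, he⟩
            omega
          simp [δ, he, hfr, FockV.smul_apply]
      refine mem_of_smul_mem (c := f r0) hr0 ?_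
      rw [← hfe]
      exact hf
    · push_neg at hcard
      obtain ⟨r0, hr0m, r1, hr1m, hne01⟩ := Finset.one_lt_card.mp hcard
      have hfr0 : f r0 ≠ 0 := (mem_filter.mp hr0m).2
      obtain ⟨i, hi⟩ := lamK_sep hq0 hq1 hs0 hI0 hne01
      set g : FockV K n := Kop q s I i f - lamK q s I i r1 • f with hg
      have hgW : g ∈ W := W.sub_mem (hK i f hf) (W.smul_mem _ hf)
      have hgr : ∀ r : Fin n → Fin 2,
          g r = (lamK q s I i r - lamK q s I i r1) * f r := by
        intro r
        rw [hg, FockV.sub_apply, FockV.smul_apply, Kop_apply, sub_mul]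
      have hg0 : g ≠ 0 := by
        intro e
        have h2 := hgr r0
        rw [e, FockV.zero_apply] at h2
        rcases mul_eq_zero.mp h2.symm with h' | h'
        · exact hi (sub_eq_zero.mp h')
        · exact hfr0 h'
      have hsub : (univ.filter fun r : Fin n → Fin 2 => g r ≠ 0)
          ⊆ (univ.filter fun r : Fin n → Fin 2 => f r ≠ 0).erase r1 := by
        intro r hr
        have hgr' := (mem_filter.mp hr).2
        refine Finset.mem_erase.mpr ⟨?_, mem_filter.mpr ⟨mem_univ r, ?_⟩⟩
        · intro e; subst e; rw [hgr, sub_self, zero_mul] at hgr'; exact hgr' rfl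
        · intro e; rw [hgr, e, mul_zero] at hgr'; exact hgr' rfl
      have hc1 := Finset.card_le_card hsub
      have hc2 := Finset.card_erase_lt_of_mem hr1m
      exact ih g hgW hg0 (by omega)

lemma eq_sum_δ (f : FockV K n) : f = ∑ r : Fin n → Fin 2, f r • (δ r : FockV K n) := by
  funext r'
  rw [FockV.finset_sum_apply]
  have hterm : ∀ r ∈ (univ : Finset (Fin n → Fin 2)),
      (f r • (δ r : FockV K n)) r' = if r' = r then f r else 0 := by
    intro r _
    rw [FockV.smul_apply]
    by_cases he : r' = r <;> simp [δ, he]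
  rw [Finset.sum_congr rfl hterm, Finset.sum_ite_eq univ r' f, if_pos (mem_univ r')]

end SpinorAux

open SpinorAux

/-- the spinor representation `V_q(n)` of `U_q(osp(1|2n), Θ₁)` (the pullback
of the Fock space of `Cl_q(n)` along `π`) is irreducible, has dimension `2^n`, and the
vacuum `|0⟩` is a highest weight vector of weight `(1,…,1, √-1 q^{1/2})`:
`e_i |0⟩ = 0` for all `i`, `k_i |0⟩ = |0⟩` for `i < n` and `k_n |0⟩ = √-1 q^{1/2} |0⟩`. -/
theorem stmt11 {K : Type*} [Field K] (q s I : K) (hq0 : q ≠ 0) (hq1 : q ^ 2 ≠ 1)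
    (hs : s ^ 2 = q) (hs0 : s ≠ 0) (hI : I ^ 2 = -1) (n : ℕ) (hn : 1 ≤ n) :
    -- irreducibility
    (∀ W : Submodule K (FockV K n),
      (∀ (i : Fin n) (f : FockV K n), f ∈ W → Eop s I i f ∈ W) →
      (∀ (i : Fin n) (f : FockV K n), f ∈ W → Fop i f ∈ W) →
      (∀ (i : Fin n) (f : FockV K n), f ∈ W → Kop q s I i f ∈ W) →
      (∀ (i : Fin n) (f : FockV K n), f ∈ W → Kinvop q s I i f ∈ W) →
      W ≠ ⊥ → W = ⊤) ∧
    -- dimension 2^n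
    Module.finrank K (FockV K n) = 2 ^ n ∧
    -- `|0⟩` is a highest weight vector of weight `(1, …, 1, √-1 q^{1/2})`
    (∀ i : Fin n, Eop s I i (fockVac K n) = 0) ∧
    (∀ i : Fin n,
      Kop q s I i (fockVac K n) =
        (if (i : ℕ) + 1 < n then (1 : K) else I * s) • fockVac K n) := by
  classical
  have hq1' : q ≠ 1 := fun e => hq1 (by rw [e]; ring)
  have hI0 : I ≠ 0 := by
    intro e
    rw [e] at hI
    have h2 : (-1 : K) = 0 := by rw [← hI]; ring
    rw [neg_eq_zero] at h2
    exact one_ne_zero h2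
  have hss : s - s⁻¹ ≠ 0 := by
    intro e
    apply hq1'
    have hs1 : s = s⁻¹ := sub_eq_zero.mp e
    rw [← hs, sq]
    nth_rewrite 2 [hs1]
    exact mul_inv_cancel₀ hs0
  refine ⟨?_, ?_, ?_, ?_⟩
  · -- irreducibility
    intro W hE hF hK _hKinv hbot
    obtain ⟨f, hfW, hf0⟩ := (Submodule.ne_bot_iff W).mp hbot
    obtain ⟨r, hr⟩ := exists_δ_mem hq0 hq1' hs0 hI0 hK _ f hfW hf0 le_rfl
    have h0W : (δ 0 : FockV K n) ∈ W := δ_zero_mem hI0 hss hE (Mw r) r le_rfl hr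
    have hall : ∀ r' : Fin n → Fin 2, (δ r' : FockV K n) ∈ W := fun r' =>
      δ_all_mem hF h0W (Mw r') r' le_rfl
    rw [eq_top_iff]
    intro g _
    rw [eq_sum_δ g]
    exact Submodule.sum_mem W fun r' _ => W.smul_mem _ (hall r')
  · -- dimension
    have h2 : Module.finrank K ((Fin n → Fin 2) → K) = 2 ^ n := by
      rw [Module.finrank_fintype_fun_eq_card, Fintype.card_fun]
      simp
    exact h2
  · -- highest weight: Eop kills the vacuum
    intro i
    rw [fockVac_eq_δ]
    by_cases h : (i : ℕ) + 1 < n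
    · simp only [Eop, dif_pos h]
      rw [ψdop_δ_zero (show (0 : Fin n → Fin 2) ⟨(i : ℕ) + 1, h⟩ = 0 from rfl),
        ψop_smul, ψop_δ_zero (show Function.update (0 : Fin n → Fin 2) ⟨(i : ℕ) + 1, h⟩ 1 i = 0 by
          rw [Function.update_of_ne (SpinorAux.Fin.ne_succ i h)]; rfl), smul_zero]
    · simp only [Eop, dif_neg h]
      rw [ψop_δ_zero (show (0 : Fin n → Fin 2) i = 0 from rfl), smul_zero]
  · -- Kop eigenvalues on the vacuum
    intro i
    rw [fockVac_eq_δ, Kop_δ]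
    congr 1
    unfold lamK
    by_cases h : (i : ℕ) + 1 < n
    · rw [dif_pos h, if_pos h]
      show q⁻¹ ^ (((0 : Fin 2) : ℕ)) * q ^ (((0 : Fin 2) : ℕ)) = 1
      simp
    · rw [dif_neg h, if_neg h]
      show I * s * q⁻¹ ^ (((0 : Fin 2) : ℕ)) = I * s
      simp
end

section
/- In the deformed boson algebra, the quantum Serre-type identity φ_m² φ_m† + φ_m† φ_m² - (q + q^{-1}) φ_m φ_m† φ_m = 0 holds. -/
/-- in the deformed boson algebra, the quantum Serre-type identity
`φ_m² φ_m† + φ_m† φ_m² - (q + q⁻¹) φ_m φ_m† φ_m = 0` holds. -/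
theorem stmt14 {K A : Type*} [Field K] [Ring A] [Algebra K A]
    (q : K) (hq0 : q ≠ 0) (hq1 : q ^ 2 ≠ 1)
    (φ φd u uinv : A)
    (hu : u * uinv = 1) (hu' : uinv * u = 1)
    (huφ : u * φ = q⁻¹ • (φ * u)) (huφd : u * φd = q • (φd * u))
    (huinvφ : uinv * φ = q • (φ * uinv)) (huinvφd : uinv * φd = q⁻¹ • (φd * uinv))
    (rel_q : φ * φd - q • (φd * φ) = uinv)
    (rel_qinv : φ * φd - q⁻¹ • (φd * φ) = u) :
    φ ^ 2 * φd + φd * φ ^ 2 - (q + q⁻¹) • (φ * φd * φ) = 0 := by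
  have hqq : q * q⁻¹ = 1 := mul_inv_cancel₀ hq0
  have hc : q - q⁻¹ ≠ 0 := by
    intro h
    apply hq1
    have h' : q = q⁻¹ := sub_eq_zero.mp h
    calc q ^ 2 = q * q := sq q
    _ = q * q⁻¹ := by rw [← h']
    _ = 1 := hqq
  -- key combinations of the two relations
  have h1 : (q - q⁻¹) • (φ * φd) = q • u - q⁻¹ • uinv := by
    rw [← rel_q, ← rel_qinv]
    match_scalars <;> field_simp <;> ring
  have h2 : (q - q⁻¹) • (φd * φ) = u - uinv := by
    rw [← rel_q, ← rel_qinv]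
    match_scalars <;> field_simp <;> ring
  -- commutation of φ past u, uinv
  have fu : φ * u = q • (u * φ) := by
    rw [huφ, smul_smul, hqq, one_smul]
  have fuinv : φ * uinv = q⁻¹ • (uinv * φ) := by
    rw [huinvφ, smul_smul, inv_mul_cancel₀ hq0, one_smul]
  -- the three cubic terms, multiplied by (q - q⁻¹)
  have s1 : (q - q⁻¹) • (φ ^ 2 * φd) = (q * q) • (u * φ) - (q⁻¹ * q⁻¹) • (uinv * φ) := by
    calc (q - q⁻¹) • (φ ^ 2 * φd) = φ * ((q - q⁻¹) • (φ * φd)) := by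
          rw [mul_smul_comm, pow_two, mul_assoc]
    _ = φ * (q • u - q⁻¹ • uinv) := by rw [h1]
    _ = q • (φ * u) - q⁻¹ • (φ * uinv) := by
          rw [mul_sub, mul_smul_comm, mul_smul_comm]
    _ = (q * q) • (u * φ) - (q⁻¹ * q⁻¹) • (uinv * φ) := by
          rw [fu, fuinv, smul_smul, smul_smul]
  have s2 : (q - q⁻¹) • (φd * φ ^ 2) = u * φ - uinv * φ := by
    calc (q - q⁻¹) • (φd * φ ^ 2) = ((q - q⁻¹) • (φd * φ)) * φ := by
          rw [smul_mul_assoc, pow_two, mul_assoc]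
    _ = (u - uinv) * φ := by rw [h2]
    _ = u * φ - uinv * φ := sub_mul _ _ _
  have s3 : (q - q⁻¹) • (φ * φd * φ) = q • (u * φ) - q⁻¹ • (uinv * φ) := by
    calc (q - q⁻¹) • (φ * φd * φ) = ((q - q⁻¹) • (φ * φd)) * φ := by
          rw [smul_mul_assoc]
    _ = (q • u - q⁻¹ • uinv) * φ := by rw [h1]
    _ = q • (u * φ) - q⁻¹ • (uinv * φ) := by
          rw [sub_mul, smul_mul_assoc, smul_mul_assoc]
  -- multiply the goal by (q - q⁻¹) ≠ 0
  suffices h : (q - q⁻¹) • (φ ^ 2 * φd + φd * φ ^ 2 - (q + q⁻¹) • (φ * φd * φ)) = 0 by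
    rcases smul_eq_zero.mp h with h' | h'
    · exact absurd h' hc
    · exact h'
  rw [smul_sub, smul_add, s1, s2, smul_comm, s3]
  match_scalars <;> field_simp <;> ring
end

section
/- In the deformed Clifford superalgebra Cl_q(m,n), the images E_m = φ_m ψ_1† and E_{m+1} = ψ_1 ψ_2† satisfy E_m E_{m+1} - q^{-1} E_{m+1} E_m = q^{-1} φ_m ψ_2† v_1^{-1}. -/
/-- in the deformed Clifford superalgebra `Cl_q(m,n)`, the elements
`E_m = φ_m ψ_1†` and `E_{m+1} = ψ_1 ψ_2†` satisfy
`E_m E_{m+1} - q⁻¹ E_{m+1} E_m = q⁻¹ φ_m ψ_2† v_1⁻¹`.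
Here `φ` is the bosonic generator `φ_m`, `w1, w1d, w2d, v1, v1inv` are the fermionic
generators `ψ_1, ψ_1†, ψ_2†, v_1^{±1}`. -/
theorem stmt16 {K A : Type*} [Field K] [Ring A] [Algebra K A]
    (q : K) (hq0 : q ≠ 0) (hq1 : q ^ 2 ≠ 1)
    (φ w1 w1d w2d v1 v1inv : A)
    -- fermionic relations
    (rel_q : w1 * w1d + q • (w1d * w1) = v1inv)
    (rel_qinv : w1 * w1d + q⁻¹ • (w1d * w1) = v1)
    (hv1 : v1 * v1inv = 1) (hv1' : v1inv * v1 = 1)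
    (h12 : w1 * w2d + w2d * w1 = 0) (h12d : w1d * w2d + w2d * w1d = 0)
    (hv12 : v1 * w2d = w2d * v1) (hv12' : v1inv * w2d = w2d * v1inv)
    -- bosonic and fermionic generators commute
    (hb : ∀ y ∈ [w1, w1d, w2d, v1, v1inv], φ * y = y * φ) :
    (φ * w1d) * (w1 * w2d) - q⁻¹ • ((w1 * w2d) * (φ * w1d)) =
      q⁻¹ • (φ * w2d * v1inv) := by
  have c1 : φ * w1 = w1 * φ := hb w1 (by simp)
  have c2d : φ * w2d = w2d * φ := hb w2d (by simp)
  have a12 : w2d * w1d = -(w1d * w2d) :=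
    eq_neg_of_add_eq_zero_right h12d
  -- key relation: w1d*w1 + q⁻¹ • (w1*w1d) = q⁻¹ • v1inv
  have key : w1d * w1 + q⁻¹ • (w1 * w1d) = q⁻¹ • v1inv := by
    have h : q⁻¹ • (w1 * w1d + q • (w1d * w1)) = q⁻¹ • v1inv := by rw [rel_q]
    rw [smul_add, smul_smul, inv_mul_cancel₀ hq0, one_smul, add_comm] at h
    exact h
  -- move φ to the left in the second term
  have e1 : (w1 * w2d) * (φ * w1d) = φ * (w1 * (w2d * w1d)) := by
    calc (w1 * w2d) * (φ * w1d) = w1 * ((w2d * φ) * w1d) := by noncomm_ring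
    _ = w1 * ((φ * w2d) * w1d) := by rw [c2d]
    _ = (w1 * φ) * (w2d * w1d) := by noncomm_ring
    _ = (φ * w1) * (w2d * w1d) := by rw [c1]
    _ = φ * (w1 * (w2d * w1d)) := by noncomm_ring
  rw [e1, a12]
  calc (φ * w1d) * (w1 * w2d) - q⁻¹ • (φ * (w1 * -(w1d * w2d)))
      = φ * ((w1d * w1 + q⁻¹ • (w1 * w1d)) * w2d) := by
        simp only [mul_neg, smul_neg, sub_neg_eq_add, add_mul, smul_mul_assoc,
          mul_add, mul_smul_comm]
        noncomm_ring
    _ = φ * ((q⁻¹ • v1inv) * w2d) := by rw [key]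
    _ = q⁻¹ • (φ * (v1inv * w2d)) := by
        rw [smul_mul_assoc, mul_smul_comm]
    _ = q⁻¹ • (φ * w2d * v1inv) := by rw [hv12']; noncomm_ring
end

section
/- In the deformed Clifford superalgebra Cl_q(m,n) (m ≥ 2, n ≥ 1), setting E_{m-1} = φ_{m-1} φ_m†, E_m = φ_m ψ_1†, E_{m+1} = ψ_1 ψ_2†, and X = E_m E_{m+1} - q^{-1} E_{m+1} E_m, the higher-order quantum Serre relation E_m E_{m-1} X - q E_m X E_{m-1} + E_{m-1} X E_m - q X E_{m-1} E_m = 0 holds. -/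
private lemma swA {A : Type*} [Ring A] {a b : A} (h : a * b = b * a) (c : A) :
    a * (b * c) = b * (a * c) := by rw [← mul_assoc, h, mul_assoc]

private lemma swS {K A : Type*} [Field K] [Ring A] [Algebra K A] {a b : A} {s : K}
    (h : a * b = s • (b * a)) (c : A) : a * (b * c) = s • (b * (a * c)) := by
  rw [← mul_assoc, h, smul_mul_assoc, mul_assoc]

private lemma swN {A : Type*} [Ring A] {a b : A} (h : a * b = -(b * a)) (c : A) :
    a * (b * c) = -(b * (a * c)) := by rw [← mul_assoc, h, neg_mul, mul_assoc]

/-- in `Cl_q(m,n)` (`m ≥ 2`, `n ≥ 1`), setting `E_{m-1} = φ_{m-1} φ_m†`,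
`E_m = φ_m ψ_1†`, `E_{m+1} = ψ_1 ψ_2†` and `X = E_m E_{m+1} - q⁻¹ E_{m+1} E_m`, the
higher-order quantum Serre relation
`E_m E_{m-1} X - q E_m X E_{m-1} + E_{m-1} X E_m - q X E_{m-1} E_m = 0` holds.
Here `p = φ_{m-1}`, `φ = φ_m`, `φd = φ_m†`, `u, uinv = u_m^{±1}`, and
`w1, w1d, w2d, v1, v1inv` are `ψ_1, ψ_1†, ψ_2†, v_1^{±1}`. -/
theorem stmt17 {K A : Type*} [Field K] [Ring A] [Algebra K A]
    (q : K) (hq0 : q ≠ 0) (hq1 : q ^ 2 ≠ 1)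
    (p φ φd u uinv w1 w1d w2d v1 v1inv : A)
    -- bosonic relations for `φ_m`, `u_m`
    (brel_q : φ * φd - q • (φd * φ) = uinv)
    (brel_qinv : φ * φd - q⁻¹ • (φd * φ) = u)
    (hu : u * uinv = 1) (hu' : uinv * u = 1)
    (huφ : u * φ = q⁻¹ • (φ * u)) (huφd : u * φd = q • (φd * u))
    (huinvφ : uinv * φ = q • (φ * uinv)) (huinvφd : uinv * φd = q⁻¹ • (φd * uinv))
    -- `φ_{m-1}` commutes with the other bosonic generators
    (hp : ∀ y ∈ [φ, φd, u, uinv], p * y = y * p)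
    -- fermionic relations
    (frel_q : w1 * w1d + q • (w1d * w1) = v1inv)
    (frel_qinv : w1 * w1d + q⁻¹ • (w1d * w1) = v1)
    (hv1 : v1 * v1inv = 1) (hv1' : v1inv * v1 = 1)
    (hv1w1 : v1 * w1 = q • (w1 * v1)) (hv1w1d : v1 * w1d = q⁻¹ • (w1d * v1))
    (hv1invw1 : v1inv * w1 = q⁻¹ • (w1 * v1inv))
    (hv1invw1d : v1inv * w1d = q • (w1d * v1inv))
    (hv1w2d : v1 * w2d = w2d * v1) (hv1invw2d : v1inv * w2d = w2d * v1inv)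
    (h12 : w1 * w2d + w2d * w1 = 0) (h12d : w1d * w2d + w2d * w1d = 0)
    -- bosonic and fermionic generators commute
    (hbf : ∀ x ∈ [p, φ, φd, u, uinv], ∀ y ∈ [w1, w1d, w2d, v1, v1inv], x * y = y * x) :
    ((φ * w1d) * (p * φd) * ((φ * w1d) * (w1 * w2d) - q⁻¹ • ((w1 * w2d) * (φ * w1d)))
      - q • ((φ * w1d) * ((φ * w1d) * (w1 * w2d) - q⁻¹ • ((w1 * w2d) * (φ * w1d)))
              * (p * φd))
      + (p * φd) * ((φ * w1d) * (w1 * w2d) - q⁻¹ • ((w1 * w2d) * (φ * w1d)))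
          * (φ * w1d)
      - q • (((φ * w1d) * (w1 * w2d) - q⁻¹ • ((w1 * w2d) * (φ * w1d)))
              * (p * φd) * (φ * w1d))) = 0 := by
  -- commutation facts
  have cφp : φ * p = p * φ := (hp φ (by simp)).symm
  have cφdp : φd * p = p * φd := (hp φd (by simp)).symm
  have cw1φ : w1 * φ = φ * w1 := (hbf φ (by simp) w1 (by simp)).symm
  have cw1dφ : w1d * φ = φ * w1d := (hbf φ (by simp) w1d (by simp)).symm
  have cw2dφ : w2d * φ = φ * w2d := (hbf φ (by simp) w2d (by simp)).symm
  have cvφ : v1inv * φ = φ * v1inv := (hbf φ (by simp) v1inv (by simp)).symm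
  have cw1dφd : w1d * φd = φd * w1d := (hbf φd (by simp) w1d (by simp)).symm
  have cw2dφd : w2d * φd = φd * w2d := (hbf φd (by simp) w2d (by simp)).symm
  have cvφd : v1inv * φd = φd * v1inv := (hbf φd (by simp) v1inv (by simp)).symm
  have cw1dp : w1d * p = p * w1d := (hbf p (by simp) w1d (by simp)).symm
  have cw2dp : w2d * p = p * w2d := (hbf p (by simp) w2d (by simp)).symm
  have cvp : v1inv * p = p * v1inv := (hbf p (by simp) v1inv (by simp)).symm
  have cw2dw1d : w2d * w1d = -(w1d * w2d) := eq_neg_of_add_eq_zero_right h12d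
  have cw1dv : w1d * v1inv = q⁻¹ • (v1inv * w1d) := by
    rw [hv1invw1d, smul_smul, inv_mul_cancel₀ hq0, one_smul]
  have hX : (φ * w1d) * (w1 * w2d) - q⁻¹ • ((w1 * w2d) * (φ * w1d))
      = q⁻¹ • (φ * (v1inv * w2d)) := by
    rw [← frel_q]
    simp only [mul_assoc, mul_add, add_mul, mul_sub, sub_mul, smul_add, smul_sub,
      smul_mul_assoc, mul_smul_comm, smul_smul, neg_mul, mul_neg, smul_neg, neg_neg,
      cw1φ, swA cw1φ, cw1dφ, swA cw1dφ, cw2dφ, swA cw2dφ,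
      cw2dw1d, swN cw2dw1d]
    match_scalars <;> field_simp
  have h1 : φ * φd = uinv + q • (φd * φ) := by rw [← brel_q]; abel
  have h2 : φd * φ = q • (φ * φd) - q • u := by
    have h2' : q • u = q • (φ * φd) - φd * φ := by
      rw [← brel_qinv, smul_sub, smul_smul, mul_inv_cancel₀ hq0, one_smul]
    rw [h2']; abel
  have e3 : uinv - u = (q⁻¹ - q) • (φd * φ) := by
    rw [← brel_q, ← brel_qinv, sub_smul]; abel
  have hB : φ * (φ * φd) + φd * (φ * φ) = (q + q⁻¹) • (φ * (φd * φ)) := by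
    have e1 : φ * (φ * φd) = φ * uinv + q • (φ * (φd * φ)) := by
      rw [h1, mul_add, mul_smul_comm]
    have e2 : φd * (φ * φ) = q • (φ * (φd * φ)) - φ * u := by
      calc φd * (φ * φ) = (φd * φ) * φ := by rw [mul_assoc]
        _ = (q • (φ * φd) - q • u) * φ := by rw [h2]
        _ = q • (φ * (φd * φ)) - q • (u * φ) := by
            rw [sub_mul, smul_mul_assoc, smul_mul_assoc, mul_assoc]
        _ = q • (φ * (φd * φ)) - φ * u := by
            rw [huφ, smul_smul, mul_inv_cancel₀ hq0, one_smul]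
    have e4 : φ * uinv = (q⁻¹ - q) • (φ * (φd * φ)) + φ * u := by
      calc φ * uinv = φ * (uinv - u) + φ * u := by rw [mul_sub]; abel
        _ = (q⁻¹ - q) • (φ * (φd * φ)) + φ * u := by rw [e3, mul_smul_comm]
    rw [e1, e2, e4]
    module
  rw [hX]
  simp only [mul_assoc, mul_add, add_mul, mul_sub, sub_mul, smul_add, smul_sub,
    smul_mul_assoc, mul_smul_comm, smul_smul, neg_mul, mul_neg, smul_neg, neg_neg,
    cw1dφ, swA cw1dφ, cw1dφd, swA cw1dφd, cw1dp, swA cw1dp,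
    cvφ, swA cvφ, cvφd, swA cvφd, cvp, swA cvp,
    cw2dφ, swA cw2dφ, cw2dφd, swA cw2dφd, cw2dp, swA cw2dp,
    cφp, swA cφp, cφdp, swA cφdp,
    cw1dv, swS cw1dv, cw2dw1d, swN cw2dw1d]
  set F := v1inv * (w1d * w2d) with hF
  have key : p * (φ * (φ * (φd * F))) + p * (φd * (φ * (φ * F)))
      = (q + q⁻¹) • (p * (φ * (φd * (φ * F)))) := by
    have := congrArg (fun x => p * (x * F)) hB
    simpa [mul_add, add_mul, smul_mul_assoc, mul_smul_comm, mul_assoc] using this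
  have eX2 : p * (φ * (φ * (φd * F)))
      = (q + q⁻¹) • (p * (φ * (φd * (φ * F)))) - p * (φd * (φ * (φ * F))) := by
    rw [← key]; abel
  rw [eX2]
  match_scalars <;> field_simp <;> ring
end

section
/- Every finite-dimensional irreducible representation of the Lie superalgebra osp(1|2) has odd dimension; consequently, the 2-dimensional spinor representation V_q(1) of U_q(osp(1|2)) is not a deformation of any finite-dimensional irreducible representation of osp(1|2). -/
/-- The coefficient sequence for the action of `e` on the string `f^k v`. -/
def cseq (lam : ℂ) : ℕ → ℂ
  | 0 => 0
  | (k + 1) => (lam - (k : ℂ)) - cseq lam k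

lemma cseq_even (lam : ℂ) (m : ℕ) : cseq lam (2 * m) = -(m : ℂ) := by
  induction m with
  | zero => simp [cseq]
  | succ m ih =>
    have h2 : 2 * (m + 1) = (2 * m + 1) + 1 := by ring
    rw [h2, cseq, cseq, ih]
    push_cast
    ring

/-- In a finite-dimensional space, a chain of vectors whose `h`-eigenvalues strictly
shift by `δ ≠ 0` must hit zero. -/
lemma chain_hits_zero {V : Type*} [AddCommGroup V] [Module ℂ V] [FiniteDimensional ℂ V]
    (h : Module.End ℂ V) (u : ℕ → V) (μ : ℂ) (δ : ℂ) (hδ : δ ≠ 0)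
    (heig : ∀ k, h (u k) = (μ + k * δ) • u k) : ∃ k, u k = 0 := by
  by_contra hc
  push_neg at hc
  set d := Module.finrank ℂ V with hd
  have hli : LinearIndependent ℂ (fun i : Fin (d + 1) => u i) := by
    apply h.eigenvectors_linearIndependent' (fun i : Fin (d+1) => μ + (i : ℕ) * δ)
    · intro i j hij
      simp only at hij
      have h2 : ((i : ℕ) : ℂ) * δ = ((j : ℕ) : ℂ) * δ := by linear_combination hij
      have : ((i : ℕ) : ℂ) = ((j : ℕ) : ℂ) := mul_right_cancel₀ hδ h2
      exact Fin.ext (Nat.cast_injective this)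
    · intro i
      exact ⟨Module.End.mem_eigenspace_iff.2 (heig i), hc i⟩
  have := hli.fintype_card_le_finrank
  simp [hd] at this

/-- every finite-dimensional irreducible representation of the Lie
superalgebra `osp(1|2)` has odd dimension; consequently the 2-dimensional spinor
representation `V_q(1)` of `U_q(osp(1|2))` is not a deformation of any finite-dimensional
irreducible representation of `osp(1|2)`.

A representation of `osp(1|2)` on a complex vector space `V` is given by the images
`e, f : End(V)` of the two odd generators; the even part acts through `e², f²` and
`h := e f + f e`, and the defining relations of `osp(1|2)` are `[h, e] = e` and
`[h, f] = -f`.  Irreducibility: the only subspaces invariant under `e` and `f` are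
`⊥` and `⊤`.  The conclusion: `dim V` is odd — and in particular `dim V ≠ 2`, so no
finite-dimensional irreducible `osp(1|2)`-module can have the dimension of `V_q(1)`. -/
theorem stmt19 (V : Type*) [AddCommGroup V] [Module ℂ V]
    [FiniteDimensional ℂ V] (hV : Nontrivial V)
    (e f : Module.End ℂ V)
    (hrel_e : ⁅e * f + f * e, e⁆ = e)
    (hrel_f : ⁅e * f + f * e, f⁆ = -f)
    (hirr : ∀ W : Submodule ℂ V,
      (∀ x ∈ W, e x ∈ W) → (∀ x ∈ W, f x ∈ W) → W = ⊥ ∨ W = ⊤) :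
    Odd (Module.finrank ℂ V) ∧ Module.finrank ℂ V ≠ 2 := by
  classical
  set h : Module.End ℂ V := e * f + f * e with hdef
  -- pointwise commutation relations
  have he' : h * e = e * h + e := by
    rw [Ring.lie_def] at hrel_e
    rw [sub_eq_iff_eq_add] at hrel_e
    rw [hrel_e]; abel
  have hf' : h * f = f * h - f := by
    rw [Ring.lie_def] at hrel_f
    rw [sub_eq_iff_eq_add] at hrel_f
    rw [hrel_f]; abel
  have hE : ∀ (μ : ℂ) (x : V), h x = μ • x → h (e x) = (μ + 1) • e x := by
    intro μ x hx
    have := congrArg (fun g : Module.End ℂ V => g x) he'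
    simp only [Module.End.mul_apply, LinearMap.add_apply] at this
    rw [this, hx, map_smul, add_smul, one_smul]
  have hF : ∀ (μ : ℂ) (x : V), h x = μ • x → h (f x) = (μ - 1) • f x := by
    intro μ x hx
    have := congrArg (fun g : Module.End ℂ V => g x) hf'
    simp only [Module.End.mul_apply, LinearMap.sub_apply] at this
    rw [this, hx, map_smul, sub_smul, one_smul]
  have hef : ∀ x : V, e (f x) = h x - f (e x) := by
    intro x
    simp only [hdef, LinearMap.add_apply, Module.End.mul_apply]
    abel
  -- start with any eigenvector of h
  obtain ⟨μ0, hμ0⟩ := Module.End.exists_eigenvalue h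
  obtain ⟨w, hw⟩ := hμ0.exists_hasEigenvector
  have hw0 : w ≠ 0 := hw.right
  have hww : h w = μ0 • w := Module.End.mem_eigenspace_iff.1 hw.left
  -- climb up with e to a highest-weight vector
  have hup : ∀ k : ℕ, h ((e ^ k) w) = (μ0 + k * 1) • (e ^ k) w := by
    intro k
    induction k with
    | zero => simpa using hww
    | succ k ih =>
      have : (e ^ (k + 1)) w = e ((e ^ k) w) := by rw [pow_succ']; rfl
      rw [this]
      have := hE _ _ ih
      rw [this]
      push_cast
      ring_nf
  obtain ⟨K, hK⟩ := chain_hits_zero h (fun k => (e ^ k) w) μ0 1 one_ne_zero hup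
  have hKfind : ∃ k, (e ^ k) w = 0 := ⟨K, hK⟩
  set N := Nat.find hKfind with hN
  have hNz : (e ^ N) w = 0 := Nat.find_spec hKfind
  have hNpos : 0 < N := by
    rcases Nat.eq_zero_or_pos N with h0 | h0
    · exfalso; apply hw0
      have := hNz
      rw [h0, pow_zero] at this
      simpa using this
    · exact h0
  set v : V := (e ^ (N - 1)) w with hv
  have hvne : v ≠ 0 := Nat.find_min hKfind (Nat.sub_lt hNpos one_pos)
  have hev : e v = 0 := by
    rw [hv, ← Module.End.mul_apply, ← pow_succ']
    rw [Nat.sub_add_cancel hNpos]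
    exact hNz
  set lam : ℂ := μ0 + (N - 1 : ℕ) * 1 with hlam
  have hhv : h v = lam • v := hup (N - 1)
  -- descend with f
  have hdown : ∀ k : ℕ, h ((f ^ k) v) = (lam - k) • (f ^ k) v := by
    intro k
    induction k with
    | zero => simpa using hhv
    | succ k ih =>
      have h1 : (f ^ (k + 1)) v = f ((f ^ k) v) := by rw [pow_succ']; rfl
      rw [h1, hF _ _ ih]
      push_cast
      ring_nf
  have hdown' : ∀ k : ℕ, h ((f ^ k) v) = (lam + k * (-1)) • (f ^ k) v := by
    intro k; rw [hdown k]; ring_nf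
  obtain ⟨K', hK'⟩ := chain_hits_zero h (fun k => (f ^ k) v) lam (-1) (by norm_num) hdown'
  have hKfind' : ∃ k, (f ^ k) v = 0 := ⟨K', hK'⟩
  set n := Nat.find hKfind' with hn
  have hnz : (f ^ n) v = 0 := Nat.find_spec hKfind'
  have hnpos : 0 < n := by
    rcases Nat.eq_zero_or_pos n with h0 | h0
    · exfalso; apply hvne
      have := hnz
      rw [h0, pow_zero] at this
      simpa using this
    · exact h0
  have hlt : ∀ k < n, (f ^ k) v ≠ 0 := fun k hk => Nat.find_min hKfind' hk
  -- action of e on the string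
  have hestr : ∀ k : ℕ, e ((f ^ (k + 1)) v) = cseq lam (k + 1) • (f ^ k) v := by
    intro k
    induction k with
    | zero =>
      have h1 : (f ^ 1) v = f v := by simp
      rw [h1, hef, hhv, hev, map_zero, sub_zero]
      simp [cseq]
    | succ k ih =>
      have h1 : (f ^ (k + 2)) v = f ((f ^ (k + 1)) v) := by rw [pow_succ']; rfl
      rw [h1, hef, hdown (k + 1), ih, map_smul]
      have h2 : (f ^ (k + 1)) v = f ((f ^ k) v) := by rw [pow_succ']; rfl
      rw [h2]
      rw [show cseq lam (k + 1 + 1) = (lam - (k + 1 : ℕ)) - cseq lam (k + 1) from rfl]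
      push_cast
      module
  -- the string length n is odd
  obtain ⟨m, hm⟩ := Nat.exists_eq_add_of_lt hnpos
  have hczero : cseq lam n = 0 := by
    have h0 : e ((f ^ n) v) = 0 := by rw [hnz, map_zero]
    have h1 : n = (n - 1) + 1 := (Nat.succ_pred_eq_of_pos hnpos).symm
    rw [h1, hestr (n - 1)] at h0
    rcases smul_eq_zero.1 h0 with hc | hvz
    · rw [h1]; exact hc
    · exact absurd hvz (hlt (n - 1) (Nat.sub_lt hnpos one_pos))
  have hnodd : Odd n := by
    rcases Nat.even_or_odd n with hev' | hodd
    · exfalso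
      obtain ⟨t, ht⟩ := hev'
      have : cseq lam n = -(t : ℂ) := by rw [ht, ← two_mul]; exact cseq_even lam t
      rw [hczero] at this
      have ht0 : (t : ℂ) = 0 := by linear_combination this
      have : t = 0 := Nat.cast_eq_zero.1 ht0
      omega
    · exact hodd
  -- the string is a basis
  set vv : Fin n → V := fun i => (f ^ (i : ℕ)) v with hvv
  have hli : LinearIndependent ℂ vv := by
    apply h.eigenvectors_linearIndependent' (fun i : Fin n => lam - (i : ℕ))
    · intro i j hij
      simp only at hij
      have : ((i : ℕ) : ℂ) = ((j : ℕ) : ℂ) := by linear_combination -hij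
      exact Fin.ext (Nat.cast_injective this)
    · intro i
      exact ⟨Module.End.mem_eigenspace_iff.2 (hdown i), hlt i i.isLt⟩
  set W : Submodule ℂ V := Submodule.span ℂ (Set.range vv) with hW
  have hWf : ∀ x ∈ W, f x ∈ W := by
    intro x hx
    have hle : W ≤ W.comap f := by
      rw [hW]
      apply Submodule.span_le.2
      rintro _ ⟨i, rfl⟩
      simp only [SetLike.mem_coe, Submodule.mem_comap]
      have h1 : f (vv i) = (f ^ ((i : ℕ) + 1)) v := by rw [pow_succ']; rfl
      rcases Nat.lt_or_ge ((i : ℕ) + 1) n with hlt' | hge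
      · rw [h1]
        exact Submodule.subset_span ⟨⟨(i : ℕ) + 1, hlt'⟩, rfl⟩
      · have : (i : ℕ) + 1 = n := le_antisymm i.isLt hge
        rw [h1, this, hnz]
        exact W.zero_mem
    exact hle hx
  have hWe : ∀ x ∈ W, e x ∈ W := by
    intro x hx
    have hle : W ≤ W.comap e := by
      rw [hW]
      apply Submodule.span_le.2
      rintro _ ⟨i, rfl⟩
      simp only [SetLike.mem_coe, Submodule.mem_comap]
      rcases Nat.eq_zero_or_pos (i : ℕ) with h0 | hpos
      · have : vv i = v := by rw [hvv]; simp [h0]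
        rw [this, hev]
        exact W.zero_mem
      · obtain ⟨k, hk⟩ := Nat.exists_eq_add_of_lt hpos
        have hik : (i : ℕ) = k + 1 := by omega
        have h1 : e (vv i) = cseq lam (k + 1) • (f ^ k) v := by
          rw [hvv]; simp only; rw [hik]; exact hestr k
        rw [h1]
        apply W.smul_mem
        exact Submodule.subset_span ⟨⟨k, by omega⟩, rfl⟩
    exact hle hx
  have hWtop : W = ⊤ := by
    rcases hirr W hWe hWf with hbot | htop
    · exfalso
      have : vv ⟨0, hnpos⟩ ∈ W := Submodule.subset_span ⟨_, rfl⟩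
      rw [hbot, Submodule.mem_bot] at this
      exact hlt 0 hnpos (by simpa [hvv] using this)
    · exact htop
  have hspan : ⊤ ≤ Submodule.span ℂ (Set.range vv) := by rw [← hW, hWtop]
  have hrank : Module.finrank ℂ V = n := by
    rw [Module.finrank_eq_card_basis (Module.Basis.mk hli hspan), Fintype.card_fin]
  rw [hrank]
  obtain ⟨t, ht⟩ := hnodd
  exact ⟨⟨t, ht⟩, by omega⟩
end
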